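/- arXiv:1204.2752 — 8 statements merged into one kernel-verified Lean document; each statement's English description precedes it below -/
import Mathlib

section
/- Let A and B be finite-dimensional C*-algebras, J ⊆ A a positively generated subspace, and Φ : A → B a completely positive map with Choi matrix X_Φ ∈ B ⊗ A. Then Φ preserves trace on J (i.e., Tr Φ(a) = Tr a for all a ∈ J) if and only if Tr_B(X_Φ) ∈ I_A + (J^T)^⊥, where (J^T)^⊥ is the orthogonal complement of the transpose of J with respect to the Hilbert–Schmidt inner product. -/
open Matrix ComplexOrder

variable {n m : Type*} [Fintype n] [DecidableEq n] [Fintype m] [DecidableEq m]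

/-- Partial trace over the first tensor factor `B` of `B ⊗ A`,
realized on matrices indexed by products. -/
noncomputable def ptrace (X : Matrix (m × n) (m × n) ℂ) : Matrix n n ℂ :=
  Matrix.of fun a b => ∑ i, X (i, a) (i, b)

/-- The Choi matrix of a linear map `Φ : A → B` (on full matrix algebras). -/
noncomputable def choi (Φ : Matrix n n ℂ →ₗ[ℂ] Matrix m m ℂ) : Matrix (m × n) (m × n) ℂ :=
  Matrix.of fun p q => Φ (Matrix.single p.2 q.2 1) p.1 q.1

/-- Hilbert–Schmidt orthogonal complement of a subspace. -/
noncomputable def hsPerp {k : Type*} [Fintype k] (J : Submodule ℂ (Matrix k k ℂ)) :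
    Submodule ℂ (Matrix k k ℂ) where
  carrier := {x | ∀ a ∈ J, Matrix.trace (aᴴ * x) = 0}
  add_mem' := by
    intro x y hx hy a ha
    simp [Matrix.mul_add, hx a ha, hy a ha]
  zero_mem' := by intro a ha; simp
  smul_mem' := by
    intro c x hx a ha
    simp [Matrix.mul_smul, hx a ha]

/-- Hilbert–Schmidt orthogonal complement of the transpose `J^T` of a subspace `J`. -/
def hsPerpT {k : Type*} [Fintype k] (J : Submodule ℂ (Matrix k k ℂ)) : Set (Matrix k k ℂ) :=
  {x | ∀ a ∈ J, Matrix.trace (aᵀᴴ * x) = 0}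

/-- A subspace is positively generated if it is spanned by its positive elements. -/
def PositivelyGenerated {k : Type*} [Fintype k] (J : Submodule ℂ (Matrix k k ℂ)) : Prop :=
  J = Submodule.span ℂ {a : Matrix k k ℂ | a ∈ J ∧ a.PosSemidef}

/-- `P` is the support projection of `X`: a Hermitian idempotent with the same range. -/
def IsSupportProj {k : Type*} [Fintype k] [DecidableEq k] (X P : Matrix k k ℂ) : Prop :=
  P.IsHermitian ∧ P * P = P ∧
    LinearMap.range (Matrix.toLin' P) = LinearMap.range (Matrix.toLin' X)

lemma trace_apply_eq (Φ : Matrix n n ℂ →ₗ[ℂ] Matrix m m ℂ) (a : Matrix n n ℂ) :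
    Matrix.trace (Φ a) = Matrix.trace (aᵀ * ptrace (choi Φ)) := by
  set M := ptrace (choi Φ) with hMdef
  have hM : ∀ j k : n, Matrix.trace (Φ (Matrix.single j k 1)) = M j k := by
    intro j k
    simp [hMdef, ptrace, choi, Matrix.trace]
  have hsb : ∀ (j k : n),
      Matrix.single j k (a j k) = a j k • Matrix.single j k 1 := by
    intro j k
    rw [Matrix.smul_single, smul_eq_mul, mul_one]
  calc Matrix.trace (Φ a) = ∑ j, ∑ k, a j k * M j k := by
        conv_lhs => rw [matrix_eq_sum_single a]
        simp only [hsb, map_sum, LinearMap.map_smul, Matrix.trace_sum,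
          Matrix.trace_smul, smul_eq_mul, hM]
    _ = Matrix.trace (aᵀ * M) := by
        simp only [Matrix.trace, Matrix.diag_apply, Matrix.mul_apply,
          Matrix.transpose_apply]
        rw [Finset.sum_comm]

/-- a completely positive map `Φ : A → B` preserves trace on a positively
generated subspace `J ⊆ A` iff `Tr_B(X_Φ) ∈ I_A + (J^T)^⊥`. -/
theorem trace_preserving_iff_ptrace_choi
    (J : Submodule ℂ (Matrix n n ℂ)) (hJ : PositivelyGenerated J)
    (Φ : Matrix n n ℂ →ₗ[ℂ] Matrix m m ℂ) (hCP : (choi Φ).PosSemidef) :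
    (∀ a ∈ J, Matrix.trace (Φ a) = Matrix.trace a) ↔
      ptrace (choi Φ) - 1 ∈ hsPerpT J := by
  set M := ptrace (choi Φ) with hMdef
  have hTherm : ∀ x : Matrix n n ℂ, x.PosSemidef → xᵀᴴ = xᵀ := by
    intro x hx
    ext i j
    simp only [Matrix.conjTranspose_apply, Matrix.transpose_apply]
    exact hx.isHermitian.apply j i
  constructor
  · intro H a ha
    rw [hJ] at ha
    induction ha using Submodule.span_induction with
    | mem x hx =>
        obtain ⟨hxJ, hxpos⟩ := hx
        rw [hTherm x hxpos, Matrix.mul_sub, mul_one, Matrix.trace_sub,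
          ← trace_apply_eq, Matrix.trace_transpose, H x hxJ, sub_self]
    | zero => simp
    | add x y hx hy ihx ihy =>
        rw [Matrix.transpose_add, Matrix.conjTranspose_add, Matrix.add_mul,
          Matrix.trace_add, ihx, ihy, add_zero]
    | smul c x hx ih =>
        rw [Matrix.transpose_smul, Matrix.conjTranspose_smul, Matrix.smul_mul,
          Matrix.trace_smul, ih, smul_zero]
  · intro h a ha
    rw [hJ] at ha
    induction ha using Submodule.span_induction with
    | mem x hx =>
        obtain ⟨hxJ, hxpos⟩ := hx
        have h0 := h x hxJ
        rw [hTherm x hxpos, Matrix.mul_sub, mul_one, Matrix.trace_sub,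
          sub_eq_zero] at h0
        rw [trace_apply_eq, h0, Matrix.trace_transpose]
    | zero => simp
    | add x y hx hy ihx ihy => simp [map_add, Matrix.trace_add, ihx, ihy]
    | smul c x hx ih => simp [LinearMap.map_smul, Matrix.trace_smul, ih]
end

section
/- Let X ∈ C_J(A,B) with support projection P = supp(X). Then X is an extreme point of C_J(A,B) if and only if (B⊗A)_P ∩ Lin(L) = {0}, where Lin(L) = {Y ∈ B⊗A : Tr_B Y ∈ (J^T)^⊥} and (B⊗A)_P = P(B⊗A)P. -/
open Matrix ComplexOrder

variable {n m : Type*} [Fintype n] [DecidableEq n] [Fintype m] [DecidableEq m]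

/-! ### Auxiliary lemmas -/

section Aux

set_option linter.unusedSectionVars false

variable {k : Type*} [Fintype k] [DecidableEq k]

lemma aux_mulVec_ext {M N : Matrix k k ℂ} (h : ∀ v, M *ᵥ v = N *ᵥ v) : M = N := by
  ext i j
  simpa [mulVec_single] using congrFun (h (Pi.single j 1)) i

lemma aux_star_proj_dot {P : Matrix k k ℂ} (hP : P.IsHermitian) (v w : k → ℂ) :
    star (P *ᵥ v) ⬝ᵥ w = star v ⬝ᵥ (P *ᵥ w) := by
  rw [star_mulVec, hP.eq, dotProduct_mulVec]

lemma aux_supp_mul_left {X P : Matrix k k ℂ} (hPP : P * P = P)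
    (hr : LinearMap.range (Matrix.toLin' P) = LinearMap.range (Matrix.toLin' X)) :
    P * X = X := by
  apply aux_mulVec_ext
  intro v
  have hmem : X *ᵥ v ∈ LinearMap.range (Matrix.toLin' P) := by
    rw [hr]; exact ⟨v, by simp [Matrix.toLin'_apply]⟩
  obtain ⟨w, hw⟩ := hmem
  rw [Matrix.toLin'_apply] at hw
  calc (P * X) *ᵥ v = P *ᵥ (X *ᵥ v) := by rw [← mulVec_mulVec]
  _ = P *ᵥ (P *ᵥ w) := by rw [hw]
  _ = (P * P) *ᵥ w := by rw [mulVec_mulVec]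
  _ = X *ᵥ v := by rw [hPP, hw]

lemma aux_supp_ker {X P : Matrix k k ℂ} (hX : X.IsHermitian)
    (hP : P.IsHermitian) (hPP : P * P = P)
    (hr : LinearMap.range (Matrix.toLin' P) = LinearMap.range (Matrix.toLin' X))
    (v : k → ℂ) (hv : X *ᵥ v = 0) : P *ᵥ v = 0 := by
  have hmem : P *ᵥ v ∈ LinearMap.range (Matrix.toLin' X) := by
    rw [← hr]; exact ⟨v, by simp [Matrix.toLin'_apply]⟩
  obtain ⟨w, hw⟩ := hmem
  rw [Matrix.toLin'_apply] at hw
  rw [← dotProduct_star_self_eq_zero]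
  calc star (P *ᵥ v) ⬝ᵥ (P *ᵥ v) = star v ⬝ᵥ (P *ᵥ (P *ᵥ v)) := aux_star_proj_dot hP _ _
  _ = star v ⬝ᵥ (P *ᵥ v) := by rw [mulVec_mulVec, hPP]
  _ = star v ⬝ᵥ (X *ᵥ w) := by rw [hw]
  _ = star (X *ᵥ v) ⬝ᵥ w := (aux_star_proj_dot hX v w).symm
  _ = 0 := by rw [hv]; simp

lemma aux_quad_compress {M P : Matrix k k ℂ} (hP : P.IsHermitian)
    (h1 : P * M = M) (h2 : M * P = M) (v : k → ℂ) :
    star v ⬝ᵥ M *ᵥ v = star (P *ᵥ v) ⬝ᵥ M *ᵥ (P *ᵥ v) := by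
  have h3 : M *ᵥ (P *ᵥ v) = M *ᵥ v := by rw [mulVec_mulVec, h2]
  rw [h3, aux_star_proj_dot hP, mulVec_mulVec, h1]

lemma aux_herm_quad_real {H : Matrix k k ℂ} (hH : H.IsHermitian) (v : k → ℂ) :
    (star v ⬝ᵥ H *ᵥ v).im = 0 := by
  have h : star (star v ⬝ᵥ H *ᵥ v) = star v ⬝ᵥ H *ᵥ v := by
    calc star (star v ⬝ᵥ H *ᵥ v) = star ((H *ᵥ v) ⬝ᵥ star v) := by rw [dotProduct_comm]
    _ = star (star v) ⬝ᵥ star (H *ᵥ v) := (star_dotProduct_star _ _).symm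
    _ = v ⬝ᵥ (star v ᵥ* Hᴴ) := by rw [star_star, star_mulVec]
    _ = (star v ᵥ* H) ⬝ᵥ v := by rw [hH.eq, dotProduct_comm]
    _ = star v ⬝ᵥ H *ᵥ v := (dotProduct_mulVec _ _ _).symm
  exact Complex.conj_eq_iff_im.mp h

lemma aux_quad_bound (H : Matrix k k ℂ) (v : k → ℂ) :
    |(star v ⬝ᵥ H *ᵥ v).re| ≤ (∑ p, ∑ q, ‖H p q‖) * ∑ i, ‖v i‖ ^ 2 := by
  set S := ∑ i, ‖v i‖ ^ 2 with hS
  have hSnn : 0 ≤ S := Finset.sum_nonneg fun i _ => by positivity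
  have hterm : ∀ p q : k, ‖v p‖ * ‖v q‖ ≤ S := by
    intro p q
    have h1 : ‖v p‖ ^ 2 ≤ S := Finset.single_le_sum (f := fun i => ‖v i‖ ^ 2)
      (fun i _ => by positivity) (Finset.mem_univ p)
    have h2 : ‖v q‖ ^ 2 ≤ S := Finset.single_le_sum (f := fun i => ‖v i‖ ^ 2)
      (fun i _ => by positivity) (Finset.mem_univ q)
    nlinarith [norm_nonneg (v p), norm_nonneg (v q)]
  calc |(star v ⬝ᵥ H *ᵥ v).re| ≤ ‖star v ⬝ᵥ H *ᵥ v‖ := Complex.abs_re_le_norm _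
  _ = ‖∑ p, star (v p) * ∑ q, H p q * v q‖ := by rfl
  _ ≤ ∑ p, ‖star (v p) * ∑ q, H p q * v q‖ := norm_sum_le _ _
  _ ≤ ∑ p, ∑ q, ‖H p q‖ * (‖v p‖ * ‖v q‖) := by
      refine Finset.sum_le_sum fun p _ => ?_
      rw [norm_mul, norm_star]
      calc ‖v p‖ * ‖∑ q, H p q * v q‖ ≤ ‖v p‖ * ∑ q, ‖H p q‖ * ‖v q‖ := by
            refine mul_le_mul_of_nonneg_left ?_ (norm_nonneg _)
            refine (norm_sum_le _ _).trans ?_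
            refine Finset.sum_le_sum fun q _ => ?_
            rw [norm_mul]
      _ = ∑ q, ‖H p q‖ * (‖v p‖ * ‖v q‖) := by
            rw [Finset.mul_sum]; refine Finset.sum_congr rfl fun q _ => by ring
  _ ≤ ∑ p, ∑ q, ‖H p q‖ * S := by
      refine Finset.sum_le_sum fun p _ => Finset.sum_le_sum fun q _ => ?_
      exact mul_le_mul_of_nonneg_left (hterm p q) (norm_nonneg _)
  _ = (∑ p, ∑ q, ‖H p q‖) * S := by rw [Finset.sum_mul]; simp [Finset.sum_mul]

lemma aux_quad_lower {X P : Matrix k k ℂ} (hX : X.PosSemidef)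
    (hker : ∀ v, X *ᵥ v = 0 → P *ᵥ v = 0) :
    ∃ lam : ℝ, 0 < lam ∧ ∀ u, P *ᵥ u = u → lam * ∑ i, ‖u i‖ ^ 2 ≤ (star u ⬝ᵥ X *ᵥ u).re := by
  classical
  set nf : (k → ℂ) → ℝ := fun u => ∑ i, ‖u i‖ ^ 2 with hnf
  set f : (k → ℂ) → ℝ := fun u => (star u ⬝ᵥ X *ᵥ u).re with hf
  have hcont_nf : Continuous nf :=
    continuous_finset_sum _ fun i _ => ((continuous_apply i).norm.pow 2)
  have hcont_f : Continuous f := by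
    have h1 : Continuous fun u : k → ℂ => star u ⬝ᵥ X *ᵥ u := by
      show Continuous fun u : k → ℂ => ∑ p, star (u p) * ∑ q, X p q * u q
      exact continuous_finset_sum _ fun p _ =>
        ((continuous_apply p).star.mul (continuous_finset_sum _ fun q _ =>
          continuous_const.mul (continuous_apply q)))
    exact Complex.continuous_re.comp h1
  have hpos : ∀ u : k → ℂ, u ≠ 0 → 0 < nf u := by
    intro u hu
    obtain ⟨i, hi⟩ := Function.ne_iff.mp hu
    have h1 : (0:ℝ) < ‖u i‖ ^ 2 := by
      have h := norm_pos_iff.mpr hi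
      positivity
    have h2 : ‖u i‖ ^ 2 ≤ nf u :=
      Finset.single_le_sum (f := fun i => ‖u i‖ ^ 2) (fun i _ => by positivity)
        (Finset.mem_univ i)
    linarith
  have hnf_smul : ∀ (r : ℝ) (u : k → ℂ), nf ((r:ℂ) • u) = r ^ 2 * nf u := by
    intro r u
    simp only [hnf, Pi.smul_apply, smul_eq_mul, norm_mul, Complex.norm_real,
      Real.norm_eq_abs, mul_pow, sq_abs, Finset.mul_sum]
  have hf_smul : ∀ (r : ℝ) (u : k → ℂ), f ((r:ℂ) • u) = r ^ 2 * f u := by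
    intro r u
    have h1 : star ((r:ℂ) • u) ⬝ᵥ X *ᵥ ((r:ℂ) • u)
        = ((r ^ 2 : ℝ) : ℂ) * (star u ⬝ᵥ X *ᵥ u) := by
      rw [mulVec_smul, star_smul, smul_dotProduct, dotProduct_smul]
      simp only [star_trivial, RCLike.star_def, Complex.conj_ofReal, smul_eq_mul]
      push_cast
      ring
    simp only [hf, h1, Complex.re_ofReal_mul]
  set S : Set (k → ℂ) := {u | P *ᵥ u = u ∧ nf u = 1} with hSdef
  have hSmem : ∀ u : k → ℂ, P *ᵥ u = u → u ≠ 0 →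
      (((Real.sqrt (nf u))⁻¹ : ℝ) : ℂ) • u ∈ S := by
    intro u hPu hu
    have h0 : 0 < nf u := hpos u hu
    have hs : Real.sqrt (nf u) > 0 := Real.sqrt_pos.mpr h0
    refine ⟨by rw [mulVec_smul, hPu], ?_⟩
    rw [hnf_smul]
    rw [inv_pow, Real.sq_sqrt h0.le]
    field_simp
  by_cases hS : S.Nonempty
  · have hclosed : IsClosed S := by
      have h1 : IsClosed {u : k → ℂ | P *ᵥ u = u} := by
        refine isClosed_eq ?_ continuous_id
        refine continuous_pi fun i => ?_
        show Continuous fun u : k → ℂ => ∑ j, P i j * u j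
        exact continuous_finset_sum _ fun j _ => continuous_const.mul (continuous_apply j)
      have h2 : IsClosed {u : k → ℂ | nf u = 1} := isClosed_eq hcont_nf continuous_const
      exact h1.inter h2
    have hsub : S ⊆ Metric.closedBall (0 : k → ℂ) 1 := by
      intro u hu
      rw [Metric.mem_closedBall, dist_zero_right]
      refine (pi_norm_le_iff_of_nonneg zero_le_one).mpr fun i => ?_
      have h2 : ‖u i‖ ^ 2 ≤ nf u :=
        Finset.single_le_sum (f := fun i => ‖u i‖ ^ 2) (fun i _ => by positivity)
          (Finset.mem_univ i)
      rw [hu.2] at h2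
      nlinarith [norm_nonneg (u i)]
    have hcompact : IsCompact S :=
      (isCompact_closedBall (0 : k → ℂ) 1).of_isClosed_subset hclosed hsub
    obtain ⟨u₀, hu₀S, hmin⟩ := hcompact.exists_isMinOn hS hcont_f.continuousOn
    have hlam_nonneg : 0 ≤ f u₀ := hX.re_dotProduct_nonneg u₀
    have hlam_pos : 0 < f u₀ := by
      rcases lt_or_eq_of_le hlam_nonneg with h | h
      · exact h
      · exfalso
        have hz : star u₀ ⬝ᵥ X *ᵥ u₀ = 0 := by
          apply Complex.ext
          · exact h.symm
          · simp [aux_herm_quad_real hX.1 u₀]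
        have hXu : X *ᵥ u₀ = 0 := (hX.dotProduct_mulVec_zero_iff u₀).mp hz
        have hPu : P *ᵥ u₀ = 0 := hker u₀ hXu
        have h0 : u₀ = 0 := by rw [← hu₀S.1, hPu]
        rw [h0] at hu₀S
        have h1 := hu₀S.2
        simp [hnf] at h1
    refine ⟨f u₀, hlam_pos, ?_⟩
    intro u hPu
    by_cases hu : u = 0
    · subst hu
      simp [hnf, hf]
    · have h0 : 0 < nf u := hpos u hu
      have hs : 0 < Real.sqrt (nf u) := Real.sqrt_pos.mpr h0
      set u' := (((Real.sqrt (nf u))⁻¹ : ℝ) : ℂ) • u with hu'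
      have hmem := hSmem u hPu hu
      have hle : f u₀ ≤ f u' := hmin hmem
      rw [hu', hf_smul] at hle
      rw [inv_pow, Real.sq_sqrt h0.le] at hle
      have h3 := mul_le_mul_of_nonneg_right hle h0.le
      rw [inv_mul_eq_div] at h3
      calc f u₀ * nf u ≤ f u / nf u * nf u := h3
      _ = f u := by field_simp
  · refine ⟨1, one_pos, ?_⟩
    intro u hPu
    by_cases hu : u = 0
    · subst hu; simp [hnf, hf]
    · exact absurd ⟨_, hSmem u hPu hu⟩ hS

lemma aux_exists_eps {X P H : Matrix k k ℂ} (hX : X.PosSemidef)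
    (hP : P.IsHermitian) (hPP : P * P = P)
    (hker : ∀ v, X *ᵥ v = 0 → P *ᵥ v = 0)
    (hPX : P * X = X) (hXP : X * P = X)
    (hH : H.IsHermitian) (hPH : P * H = H) (hHP : H * P = H) :
    ∃ ε : ℝ, 0 < ε ∧ (X + ε • H).PosSemidef ∧ (X - ε • H).PosSemidef := by
  obtain ⟨lam, hlam, hlow⟩ := aux_quad_lower hX hker
  set c : ℝ := ∑ p, ∑ q, ‖H p q‖ with hc
  have hc0 : 0 ≤ c := Finset.sum_nonneg fun p _ => Finset.sum_nonneg fun q _ => norm_nonneg _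
  set ε : ℝ := lam / (c + 1) with hεdef
  have hε : 0 < ε := div_pos hlam (by linarith)
  have hεc : ε * c ≤ lam := by
    rw [hεdef, div_mul_eq_mul_div, div_le_iff₀ (by linarith)]
    nlinarith
  have main : ∀ H' : Matrix k k ℂ, H'.IsHermitian → P * H' = H' → H' * P = H' →
      (∑ p, ∑ q, ‖H' p q‖) ≤ c → (X + ε • H').PosSemidef := by
    intro H' hH' hPH' hH'P hcH'
    refine Matrix.PosSemidef.of_dotProduct_mulVec_nonneg ?_ ?_
    · exact hX.1.add (by
        have h := conjTranspose_smul ε H'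
        rw [Matrix.IsHermitian, h, hH'.eq, star_trivial])
    · intro v
      have hval : star v ⬝ᵥ (X + ε • H') *ᵥ v
          = (star v ⬝ᵥ X *ᵥ v) + ε • (star v ⬝ᵥ H' *ᵥ v) := by
        rw [add_mulVec, dotProduct_add, smul_mulVec, dotProduct_smul]
      rw [hval]
      set z1 := star v ⬝ᵥ X *ᵥ v with hz1
      set z2 := star v ⬝ᵥ H' *ᵥ v with hz2
      rw [Complex.nonneg_iff]
      constructor
      · set N : ℝ := ∑ i, ‖(P *ᵥ v) i‖ ^ 2 with hN
        have hN0 : 0 ≤ N := Finset.sum_nonneg fun i _ => by positivity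
        have h1 : lam * N ≤ z1.re := by
          rw [hz1, aux_quad_compress hP hPX hXP v]
          exact hlow (P *ᵥ v) (by rw [mulVec_mulVec, hPP])
        have h2 : |z2.re| ≤ c * N := by
          rw [hz2, aux_quad_compress hP hPH' hH'P v]
          calc |(star (P *ᵥ v) ⬝ᵥ H' *ᵥ (P *ᵥ v)).re|
              ≤ (∑ p, ∑ q, ‖H' p q‖) * N := aux_quad_bound H' (P *ᵥ v)
          _ ≤ c * N := mul_le_mul_of_nonneg_right hcH' hN0
        have h2' : -(c * N) ≤ z2.re := (abs_le.mp h2).1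
        have h3 : ε * (-(c * N)) ≤ ε * z2.re := mul_le_mul_of_nonneg_left h2' hε.le
        have h4 : ε * c * N ≤ lam * N := mul_le_mul_of_nonneg_right hεc hN0
        have h5 : (z1 + ε • z2).re = z1.re + ε * z2.re := by
          simp [Complex.add_re, Complex.smul_re, smul_eq_mul]
        rw [h5]
        nlinarith
      · have i1 : z1.im = 0 := aux_herm_quad_real hX.1 v
        have i2 : z2.im = 0 := aux_herm_quad_real hH' v
        simp [Complex.add_im, Complex.smul_im, i1, i2]
  refine ⟨ε, hε, main H hH hPH hHP le_rfl, ?_⟩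
  have hneg : X - ε • H = X + ε • (-H) := by rw [smul_neg, sub_eq_add_neg]
  rw [hneg]
  refine main (-H) hH.neg (by rw [mul_neg, hPH]) (by rw [neg_mul, hHP]) ?_
  simp only [Matrix.neg_apply, norm_neg]
  exact le_of_eq hc.symm

end Aux

section PtraceAux

set_option linter.unusedSectionVars false

lemma aux_ptrace_add (A B : Matrix (m × n) (m × n) ℂ) :
    ptrace (A + B) = ptrace A + ptrace B := by
  ext a b; simp [ptrace, Finset.sum_add_distrib]

lemma aux_ptrace_sub (A B : Matrix (m × n) (m × n) ℂ) :
    ptrace (A - B) = ptrace A - ptrace B := by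
  ext a b; simp [ptrace, Finset.sum_sub_distrib]

lemma aux_ptrace_smul (c : ℂ) (A : Matrix (m × n) (m × n) ℂ) :
    ptrace (c • A) = c • ptrace A := by
  ext a b; simp [ptrace, Finset.mul_sum]

lemma aux_ptrace_rsmul (r : ℝ) (A : Matrix (m × n) (m × n) ℂ) :
    ptrace (r • A) = r • ptrace A := by
  ext a b; simp [ptrace, Finset.smul_sum]

lemma aux_ptrace_conjT (A : Matrix (m × n) (m × n) ℂ) : ptrace (Aᴴ) = (ptrace A)ᴴ := by
  ext a b
  simp only [ptrace, of_apply, conjTranspose_apply, star_sum]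

end PtraceAux

section PerpAux

variable {k : Type*} [Fintype k] {J : Submodule ℂ (Matrix k k ℂ)}

lemma aux_perpT_sub {x y : Matrix k k ℂ} (hx : x ∈ hsPerpT J) (hy : y ∈ hsPerpT J) :
    x - y ∈ hsPerpT J := by
  intro a ha
  rw [mul_sub, trace_sub, hx a ha, hy a ha, sub_zero]

lemma aux_perpT_add {x y : Matrix k k ℂ} (hx : x ∈ hsPerpT J) (hy : y ∈ hsPerpT J) :
    x + y ∈ hsPerpT J := by
  intro a ha
  rw [mul_add, trace_add, hx a ha, hy a ha, add_zero]

lemma aux_perpT_smul (c : ℂ) {x : Matrix k k ℂ} (hx : x ∈ hsPerpT J) : c • x ∈ hsPerpT J := by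
  intro a ha
  rw [mul_smul_comm, trace_smul, hx a ha, smul_zero]

lemma aux_perpT_rsmul (r : ℝ) {x : Matrix k k ℂ} (hx : x ∈ hsPerpT J) : r • x ∈ hsPerpT J := by
  intro a ha
  rw [mul_smul_comm, trace_smul, hx a ha, smul_zero]

lemma aux_J_star (hJ : PositivelyGenerated J) {a : Matrix k k ℂ} (ha : a ∈ J) : aᴴ ∈ J := by
  let J' : Submodule ℂ (Matrix k k ℂ) :=
    { carrier := {x | xᴴ ∈ J}
      add_mem' := fun hx hy => by
        simp only [Set.mem_setOf_eq, conjTranspose_add] at *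
        exact J.add_mem hx hy
      zero_mem' := by simp only [Set.mem_setOf_eq, conjTranspose_zero]; exact J.zero_mem
      smul_mem' := fun c x hx => by
        simp only [Set.mem_setOf_eq, conjTranspose_smul] at *
        exact J.smul_mem _ hx }
  have hle : J ≤ J' := by
    nth_rewrite 1 [hJ]
    apply Submodule.span_le.mpr
    rintro x ⟨hxJ, hxpos⟩
    show xᴴ ∈ J
    rwa [hxpos.1.eq]
  exact hle ha

lemma aux_perpT_star (hJ : PositivelyGenerated J) {x : Matrix k k ℂ} (hx : x ∈ hsPerpT J) :
    xᴴ ∈ hsPerpT J := by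
  intro a ha
  have key : aᵀᴴ * xᴴ = (x * aᵀ)ᴴ := by rw [conjTranspose_mul]
  have h2 : ((aᴴ)ᵀ)ᴴ = aᵀ := by ext i j; simp
  have h3 : trace (aᵀ * x) = 0 := by
    rw [← h2]
    exact hx aᴴ (aux_J_star hJ ha)
  rw [key, trace_conjTranspose, trace_mul_comm, h3, star_zero]

end PerpAux

/-- `X ∈ C_J(A,B)` with support projection `P` is an extreme point iff
`(B⊗A)_P ∩ Lin(L) = {0}`, where `Lin(L) = {Y : Tr_B Y ∈ (J^T)^⊥}`. -/
theorem extreme_iff_compression_trivial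
    (J : Submodule ℂ (Matrix n n ℂ)) (hJ : PositivelyGenerated J)
    (X P : Matrix (m × n) (m × n) ℂ)
    (hX : X.PosSemidef ∧ ptrace X - 1 ∈ hsPerpT J)
    (hP : IsSupportProj X P) :
    X ∈ Set.extremePoints ℝ
        {Y : Matrix (m × n) (m × n) ℂ | Y.PosSemidef ∧ ptrace Y - 1 ∈ hsPerpT J} ↔
      ∀ Y : Matrix (m × n) (m × n) ℂ, P * Y * P = Y → ptrace Y ∈ hsPerpT J → Y = 0 := by
  obtain ⟨hXpsd, hXtr⟩ := hX
  obtain ⟨hPh, hPP, hr⟩ := hP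
  have hPX : P * X = X := aux_supp_mul_left hPP hr
  have hXP : X * P = X := by
    have h := congrArg conjTranspose hPX
    rwa [conjTranspose_mul, hPh.eq, hXpsd.1.eq] at h
  have hker : ∀ v, X *ᵥ v = 0 → P *ᵥ v = 0 := aux_supp_ker hXpsd.1 hPh hPP hr
  constructor
  · -- extreme → compression trivial
    intro hext Y hPYP hYtr
    have hermCase : ∀ H : Matrix (m × n) (m × n) ℂ, H.IsHermitian → P * H * P = H →
        ptrace H ∈ hsPerpT J → H = 0 := by
      intro H hH hPHP hHtr
      have hPH : P * H = H := by
        nth_rewrite 1 [← hPHP]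
        rw [← mul_assoc, ← mul_assoc, hPP, hPHP]
      have hHP : H * P = H := by
        nth_rewrite 1 [← hPHP]
        rw [mul_assoc (P * H) P P, hPP, hPHP]
      obtain ⟨ε, hε, hplus, hminus⟩ := aux_exists_eps hXpsd hPh hPP hker hPX hXP hH hPH hHP
      have hYp : X + ε • H ∈ {Y : Matrix (m × n) (m × n) ℂ |
          Y.PosSemidef ∧ ptrace Y - 1 ∈ hsPerpT J} := by
        refine ⟨hplus, ?_⟩
        have h : ptrace (X + ε • H) - 1 = (ptrace X - 1) + ε • ptrace H := by
          rw [aux_ptrace_add, aux_ptrace_rsmul]; abel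
        rw [h]
        exact aux_perpT_add hXtr (aux_perpT_rsmul ε hHtr)
      have hYm : X - ε • H ∈ {Y : Matrix (m × n) (m × n) ℂ |
          Y.PosSemidef ∧ ptrace Y - 1 ∈ hsPerpT J} := by
        refine ⟨hminus, ?_⟩
        have h : ptrace (X - ε • H) - 1 = (ptrace X - 1) - ε • ptrace H := by
          rw [aux_ptrace_sub, aux_ptrace_rsmul]; abel
        rw [h]
        exact aux_perpT_sub hXtr (aux_perpT_rsmul ε hHtr)
      have hseg : X ∈ openSegment ℝ (X + ε • H) (X - ε • H) := by
        refine ⟨1/2, 1/2, by norm_num, by norm_num, by norm_num, ?_⟩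
        rw [smul_add, smul_sub]
        have hhalf : (1/2 : ℝ) • X + (1/2 : ℝ) • X = X := by
          rw [← add_smul]; norm_num
        have hH2 : (1/2 : ℝ) • (ε • H) - (1/2 : ℝ) • (ε • H) = 0 := sub_self _
        abel_nf
        abel_nf at hhalf
        rw [hhalf]
      have h2 := hext.2 hYp hYm hseg
      have h3 : X + ε • H = X := h2
      have h4 : ε • H = 0 := by rwa [add_eq_left] at h3
      rcases smul_eq_zero.mp h4 with h | h
      · exact absurd h (ne_of_gt hε)
      · exact h
    -- decompose Y into Hermitian parts
    have hYstarP : P * Yᴴ * P = Yᴴ := by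
      have h := congrArg conjTranspose hPYP
      rw [conjTranspose_mul, conjTranspose_mul, hPh.eq] at h
      rwa [← mul_assoc] at h
    have hYstarTr : ptrace Yᴴ ∈ hsPerpT J := by
      rw [aux_ptrace_conjT]; exact aux_perpT_star hJ hYtr
    have hsand : ∀ (c : ℂ) (M : Matrix (m × n) (m × n) ℂ),
        P * (c • M) * P = c • (P * M * P) := by
      intro c M; rw [mul_smul_comm, smul_mul_assoc]
    have hsum_sand : P * (Y + Yᴴ) * P = Y + Yᴴ := by
      rw [mul_add, add_mul, hPYP, hYstarP]
    have hdiff_sand : P * (Y - Yᴴ) * P = Y - Yᴴ := by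
      rw [mul_sub, sub_mul, hPYP, hYstarP]
    have hH0 : ((1:ℂ)/2) • (Y + Yᴴ) = 0 := by
      refine hermCase _ ?_ ?_ ?_
      · rw [Matrix.IsHermitian, conjTranspose_smul, conjTranspose_add,
          conjTranspose_conjTranspose]
        rw [show star ((1:ℂ)/2) = (1:ℂ)/2 by simp, add_comm]
      · rw [hsand, hsum_sand]
      · rw [aux_ptrace_smul, aux_ptrace_add, aux_ptrace_conjT]
        exact aux_perpT_smul _ (aux_perpT_add hYtr
          (by rw [← aux_ptrace_conjT]; exact hYstarTr))
    have hK0 : (-Complex.I/2) • (Y - Yᴴ) = 0 := by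
      refine hermCase _ ?_ ?_ ?_
      · rw [Matrix.IsHermitian, conjTranspose_smul, conjTranspose_sub,
          conjTranspose_conjTranspose]
        rw [show star (-Complex.I/2) = Complex.I/2 by simp]
        rw [show Yᴴ - Y = -(Y - Yᴴ) from (neg_sub _ _).symm, smul_neg]
        rw [neg_div, neg_smul]
      · rw [hsand, hdiff_sand]
      · rw [aux_ptrace_smul, aux_ptrace_sub, aux_ptrace_conjT]
        exact aux_perpT_smul _ (aux_perpT_sub hYtr
          (by rw [← aux_ptrace_conjT]; exact hYstarTr))
    have hsum0 : Y + Yᴴ = 0 := by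
      rcases smul_eq_zero.mp hH0 with h | h
      · exact absurd h (by norm_num)
      · exact h
    have hdiff0 : Y - Yᴴ = 0 := by
      rcases smul_eq_zero.mp hK0 with h | h
      · exfalso
        rw [div_eq_zero_iff] at h
        rcases h with h | h
        · exact Complex.I_ne_zero (neg_eq_zero.mp h)
        · norm_num at h
      · exact h
    have hd := sub_eq_zero.mp hdiff0
    rw [← hd] at hsum0
    have h2Y : (2 : ℂ) • Y = 0 := by rw [two_smul]; exact hsum0
    rcases smul_eq_zero.mp h2Y with h | h
    · exact absurd h (by norm_num)
    · exact h
  · -- compression trivial → extreme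
    intro hcomp
    refine ⟨⟨hXpsd, hXtr⟩, ?_⟩
    intro Y hY Z hZ hseg
    obtain ⟨a, b, ha, hb, hab, hsum⟩ := hseg
    have claim : ∀ (W V : Matrix (m × n) (m × n) ℂ), W.PosSemidef →
        ptrace W - 1 ∈ hsPerpT J → V.PosSemidef →
        ∀ p q : ℝ, 0 < p → 0 < q → p • W + q • V = X → W = X := by
      intro W V hW hWtr hV p q hp hq hs
      have hkerW : ∀ v, X *ᵥ v = 0 → W *ᵥ v = 0 := by
        intro v hv
        have h0 : star v ⬝ᵥ X *ᵥ v = 0 := by rw [hv, dotProduct_zero]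
        rw [← hs, add_mulVec, dotProduct_add, smul_mulVec, smul_mulVec,
          dotProduct_smul, dotProduct_smul] at h0
        have h1 := Complex.nonneg_iff.mp (hW.dotProduct_mulVec_nonneg v)
        have h2 := Complex.nonneg_iff.mp (hV.dotProduct_mulVec_nonneg v)
        have hz : star v ⬝ᵥ W *ᵥ v = 0 := by
          have hre0 := congrArg Complex.re h0
          simp only [Complex.add_re, Complex.smul_re, smul_eq_mul, Complex.zero_re] at hre0
          have hre : (star v ⬝ᵥ W *ᵥ v).re = 0 := by nlinarith [h1.1, h2.1]
          apply Complex.ext <;> simp [hre, ← h1.2]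
        exact (hW.dotProduct_mulVec_zero_iff v).mp hz
      have hWP : W * P = W := by
        apply aux_mulVec_ext; intro v
        have hXz : X *ᵥ (P *ᵥ v - v) = 0 := by
          rw [mulVec_sub, mulVec_mulVec, hXP, sub_self]
        have h := hkerW _ hXz
        rw [mulVec_sub, sub_eq_zero] at h
        rw [← mulVec_mulVec]
        exact h
      have hPW : P * W = W := by
        have h := congrArg conjTranspose hWP
        rwa [conjTranspose_mul, hPh.eq, hW.1.eq] at h
      have hd := hcomp (W - X)
        (by rw [mul_sub, sub_mul, hPW, hPX, hWP, hXP])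
        (by
          have h : ptrace (W - X) = (ptrace W - 1) - (ptrace X - 1) := by
            rw [aux_ptrace_sub]; abel
          rw [h]
          exact aux_perpT_sub hWtr hXtr)
      exact sub_eq_zero.mp hd
    exact claim Y Z hY.1 hY.2 hZ.1 a b ha hb hsum
end

section
/- Let Φ : A → B be a generalized channel with respect to a positively generated subspace J ⊆ A, with minimal decomposition Φ = Λ_q ∘ χ_c, where χ_c(a) = c a c*, q = supp(cc*), and Λ_q : A_q → B is a channel. Then Φ is an extreme point of C_J(A,B) if and only if Λ_q is an extreme point of C_{cJc*}(A_q, B), the set of generalized channels on A_q with respect to the subspace cJc*. -/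
set_option linter.unusedSectionVars false
set_option maxHeartbeats 1000000


open Matrix ComplexOrder

variable {n m : Type*} [Fintype n] [DecidableEq n] [Fintype m] [DecidableEq m]

/-- Compression `a ↦ p a p` as a linear map. -/
noncomputable def comprMap {k : Type*} [Fintype k] (p : Matrix k k ℂ) :
    Matrix k k ℂ →ₗ[ℂ] Matrix k k ℂ where
  toFun a := p * a * p
  map_add' a b := by simp [Matrix.mul_add, Matrix.add_mul]
  map_smul' c a := by simp [Matrix.mul_smul, Matrix.smul_mul]

/-- The map `χ_c : a ↦ c a c*` as a linear map. -/
noncomputable def sandwich {k : Type*} [Fintype k] (c : Matrix k k ℂ) :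
    Matrix k k ℂ →ₗ[ℂ] Matrix k k ℂ where
  toFun a := c * a * cᴴ
  map_add' a b := by simp [Matrix.mul_add, Matrix.add_mul]
  map_smul' t a := by simp [Matrix.mul_smul, Matrix.smul_mul]

@[simp] lemma sandwich_apply {k : Type*} [Fintype k] (c a : Matrix k k ℂ) :
    sandwich c a = c * a * cᴴ := rfl

lemma sandwich_comp {k : Type*} [Fintype k] (c d : Matrix k k ℂ) :
    sandwich c ∘ₗ sandwich d = sandwich (c * d) := by
  refine LinearMap.ext fun a => ?_
  simp [Matrix.conjTranspose_mul, Matrix.mul_assoc]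

/-- the matrix `1 ⊗ conj e` -/
noncomputable def liftE (e : Matrix n n ℂ) : Matrix (m × n) (m × n) ℂ :=
  Matrix.of fun P Q => if P.1 = Q.1 then star (e P.2 Q.2) else 0

lemma liftE_mul (e f : Matrix n n ℂ) :
    (liftE e : Matrix (m × n) (m × n) ℂ) * liftE f = liftE (e * f) := by
  ext ⟨r, i⟩ ⟨s, j⟩
  simp only [liftE, Matrix.mul_apply, Matrix.of_apply, Fintype.sum_prod_type]
  by_cases h : r = s
  · simp only [h, if_true, ite_mul, mul_ite, zero_mul, mul_zero, Finset.sum_ite_eq,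
      Finset.mem_univ, if_true, Matrix.mul_apply, star_sum, star_mul']
    rw [Finset.sum_comm]
    simp [Finset.sum_ite_eq, mul_comm]
  · simp [h, ite_mul, mul_ite, Finset.sum_ite_eq]

lemma liftE_conjTranspose (e : Matrix n n ℂ) :
    (liftE e : Matrix (m × n) (m × n) ℂ)ᴴ = liftE eᴴ := by
  ext ⟨r, i⟩ ⟨s, j⟩
  simp only [liftE, Matrix.conjTranspose_apply, Matrix.of_apply]
  by_cases h : r = s
  · simp [h, eq_comm]
  · simp [h, Ne.symm h]

lemma liftE_one : (liftE (1 : Matrix n n ℂ) : Matrix (m × n) (m × n) ℂ) = 1 := by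
  ext ⟨r, i⟩ ⟨s, j⟩
  simp only [liftE, Matrix.of_apply, Matrix.one_apply, Prod.mk.injEq, Prod.ext_iff]
  by_cases h : r = s <;> by_cases h2 : i = j <;>
    simp [h, h2, Matrix.one_apply, apply_ite (star : ℂ → ℂ)]

lemma sandwich_entry (e : Matrix n n ℂ) (i j x y : n) :
    (e * Matrix.single i j (1:ℂ) * eᴴ) x y = e x i * star (e y j) := by
  simp only [Matrix.mul_apply, Matrix.single, Matrix.conjTranspose_apply,
    Matrix.of_apply]
  simp [ite_and, ite_mul, mul_ite, Finset.sum_ite_eq, Finset.sum_ite_eq', Finset.mul_sum]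

lemma choi_entry (Ψ : Matrix n n ℂ →ₗ[ℂ] Matrix m m ℂ) (k l : n) (r s : m) :
    choi Ψ (r, k) (s, l) = Ψ (Matrix.single k l 1) r s := rfl

lemma choi_comp_sandwich (Ψ : Matrix n n ℂ →ₗ[ℂ] Matrix m m ℂ) (e : Matrix n n ℂ) :
    choi (Ψ ∘ₗ sandwich e) = (liftE e)ᴴ * choi Ψ * liftE e := by
  ext ⟨r, i⟩ ⟨s, j⟩
  have key : e * Matrix.single i j (1:ℂ) * eᴴ
      = ∑ k, ∑ l, (e k i * star (e l j)) • Matrix.single k l (1:ℂ) := by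
    ext x y
    rw [sandwich_entry]
    simp only [Matrix.sum_apply, Matrix.smul_apply, Matrix.single, Matrix.of_apply,
      smul_eq_mul]
    simp [ite_and, mul_ite, Finset.sum_ite_eq, Finset.sum_ite_eq']
  have lhs : choi (Ψ ∘ₗ sandwich e) (r, i) (s, j)
      = ∑ k, ∑ l, e k i * star (e l j) * choi Ψ (r, k) (s, l) := by
    show Ψ (e * Matrix.single i j 1 * eᴴ) r s = _
    rw [key]
    simp only [map_sum, Matrix.sum_apply]
    refine Finset.sum_congr rfl fun k _ => Finset.sum_congr rfl fun l _ => ?_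
    rw [_root_.map_smul, Matrix.smul_apply, smul_eq_mul, choi_entry]
  rw [lhs]
  have inner : ∀ (v : m) (l : n), (((liftE e : Matrix (m × n) (m × n) ℂ))ᴴ * choi Ψ) (r, i) (v, l)
      = ∑ k, e k i * choi Ψ (r, k) (v, l) := by
    intro v l
    rw [Matrix.mul_apply, Fintype.sum_prod_type]
    simp only [Matrix.conjTranspose_apply, liftE, Matrix.of_apply, apply_ite (star : ℂ → ℂ),
      star_star, star_zero, ite_mul, zero_mul]
    simp [Finset.sum_ite_eq']
  rw [Matrix.mul_apply, Fintype.sum_prod_type]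
  simp only [inner]
  simp only [liftE, Matrix.of_apply, mul_ite, mul_zero, ite_mul, zero_mul]
  conv_rhs => rw [Finset.sum_comm]
  simp only [Finset.sum_ite_eq', Finset.mem_univ, if_true, Finset.sum_mul]
  rw [Finset.sum_comm]
  exact Finset.sum_congr rfl fun k _ => Finset.sum_congr rfl fun l _ => by ring

lemma choi_inj {Ψ Ψ' : Matrix n n ℂ →ₗ[ℂ] Matrix m m ℂ} (h : choi Ψ = choi Ψ') : Ψ = Ψ' := by
  refine LinearMap.ext fun a => ?_
  rw [Matrix.matrix_eq_sum_single a]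
  simp only [map_sum]
  refine Finset.sum_congr rfl fun i _ => Finset.sum_congr rfl fun j _ => ?_
  have h1 : Ψ (Matrix.single i j 1) = Ψ' (Matrix.single i j 1) := by
    ext r s
    have := congrFun (congrFun h (r, i)) (s, j)
    simpa [choi] using this
  have h2 : Matrix.single i j (a i j) = a i j • Matrix.single i j (1:ℂ) := by
    ext x y
    simp [Matrix.single, Matrix.smul_apply, mul_ite]
  rw [h2, _root_.map_smul, _root_.map_smul, h1]

lemma choi_real_combo (a b : ℝ) (Ψ₁ Ψ₂ : Matrix n n ℂ →ₗ[ℂ] Matrix m m ℂ) :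
    choi (a • Ψ₁ + b • Ψ₂) = a • choi Ψ₁ + b • choi Ψ₂ := by
  ext ⟨r, i⟩ ⟨s, j⟩
  simp [choi, Matrix.add_apply, Matrix.smul_apply]

lemma posSemidef_real_smul {k : Type*} [Fintype k] {X : Matrix k k ℂ} (hX : X.PosSemidef)
    {t : ℝ} (ht : 0 ≤ t) : (t • X).PosSemidef := by
  have : (t • X) = ((t : ℂ) • X) := by
    ext i j; simp [Matrix.smul_apply, Complex.real_smul]
  rw [this]
  refine Matrix.PosSemidef.of_dotProduct_mulVec_nonneg ?_ ?_
  · unfold Matrix.IsHermitian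
    rw [Matrix.conjTranspose_smul, hX.1.eq]
    congr 1
    simp [Complex.ext_iff, ht]
  · intro x
    rw [Matrix.smul_mulVec, dotProduct_smul, smul_eq_mul]
    have h1 : 0 ≤ (t : ℂ) := by
      rw [Complex.le_def]; simp [ht]
    exact mul_nonneg h1 (hX.dotProduct_mulVec_nonneg x)

lemma psd_neg_eq_zero {k : Type*} [Fintype k] [DecidableEq k] {A : Matrix k k ℂ}
    (hA : A.PosSemidef) (hA' : (-A).PosSemidef) : A = 0 := by
  have h : ∀ x : k → ℂ, A *ᵥ x = 0 := by
    intro x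
    rw [← hA.dotProduct_mulVec_zero_iff]
    have h1 := hA.dotProduct_mulVec_nonneg x
    have h2 := hA'.dotProduct_mulVec_nonneg x
    rw [Matrix.neg_mulVec, dotProduct_neg] at h2
    exact le_antisymm (neg_nonneg.mp h2) h1
  ext i j
  simpa using congrFun (h (Pi.single j 1)) i

/-- If `0 ≤ X ≤ Y` and `Y * P = Y` with `P` Hermitian, then `Pᴴ * X * P = X`. -/
lemma support_dom {k : Type*} [Fintype k] [DecidableEq k] {X Y P : Matrix k k ℂ}
    (hX : X.PosSemidef) (hYX : (Y - X).PosSemidef) (hYP : Y * P = Y) (hPH : Pᴴ = P) :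
    Pᴴ * X * P = X := by
  obtain ⟨R, hR⟩ : ∃ R : Matrix k k ℂ, R = 1 - P := ⟨_, rfl⟩
  have hRH : Rᴴ = R := by rw [hR, Matrix.conjTranspose_sub, Matrix.conjTranspose_one, hPH]
  have hYR : Y * R = 0 := by rw [hR, Matrix.mul_sub, Matrix.mul_one, hYP, sub_self]
  have hRYR : Rᴴ * Y * R = 0 := by rw [Matrix.mul_assoc, hYR, Matrix.mul_zero]
  have hXR : (Rᴴ * X * R).PosSemidef := hX.conjTranspose_mul_mul_same R
  have hXRneg : (-(Rᴴ * X * R)).PosSemidef := by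
    have := hYX.conjTranspose_mul_mul_same R
    have heq : Rᴴ * (Y - X) * R = -(Rᴴ * X * R) := by
      rw [Matrix.mul_sub, Matrix.sub_mul, hRYR, zero_sub]
    rwa [heq] at this
  have hzero : Rᴴ * X * R = 0 := psd_neg_eq_zero hXR hXRneg
  have hzero' : R * X * R = 0 := by rwa [hRH] at hzero
  -- deduce X * R = 0
  have hXR0 : X * R = 0 := by
    have hv : ∀ x : k → ℂ, X *ᵥ (R *ᵥ x) = 0 := by
      intro x
      rw [← hX.dotProduct_mulVec_zero_iff, Matrix.star_mulVec, ← Matrix.dotProduct_mulVec,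
        Matrix.mulVec_mulVec, Matrix.mulVec_mulVec, hzero, Matrix.zero_mulVec, dotProduct_zero]
    refine Matrix.toLin'.injective (LinearMap.ext fun x => ?_)
    rw [Matrix.toLin'_apply, Matrix.toLin'_apply, ← Matrix.mulVec_mulVec, hv, Matrix.zero_mulVec]
  have hXP : X * P = X := by
    have h0 : X * (1 - P) = 0 := by rw [← hR, hXR0]
    rw [Matrix.mul_sub, Matrix.mul_one] at h0
    exact (sub_eq_zero.mp h0).symm
  have hPX : P * X = X := by
    have := congrArg Matrix.conjTranspose hXP
    rwa [Matrix.conjTranspose_mul, hPH, hX.1.eq] at this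
  rw [hPH, Matrix.mul_assoc, hXP, hPX]

lemma exists_support {k : Type*} [Fintype k] [DecidableEq k] (M : Matrix k k ℂ)
    (hM : M.IsHermitian) :
    ∃ p w : Matrix k k ℂ, pᴴ = p ∧ p * p = p ∧ M * p = M ∧ p * M = M ∧ w * M = p ∧ M * w = p := by
  set U : Matrix k k ℂ := (hM.eigenvectorUnitary : Matrix k k ℂ) with hU
  have hU1 : star U * U = 1 := Matrix.mem_unitaryGroup_iff'.mp hM.eigenvectorUnitary.2
  set D : k → ℂ := RCLike.ofReal ∘ hM.eigenvalues with hD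
  have hspec : M = U * Matrix.diagonal D * star U := hM.spectral_theorem
  set s : k → ℂ := fun i => if hM.eigenvalues i = 0 then 0 else 1 with hs
  set t : k → ℂ := fun i => if hM.eigenvalues i = 0 then 0 else ((hM.eigenvalues i : ℂ))⁻¹
    with ht
  have hmul : ∀ a b : k → ℂ, (U * Matrix.diagonal a * star U) * (U * Matrix.diagonal b * star U)
      = U * Matrix.diagonal (fun i => a i * b i) * star U := by
    intro a b
    rw [← Matrix.diagonal_mul_diagonal]
    simp only [Matrix.mul_assoc]
    rw [← Matrix.mul_assoc (star U) U, hU1, Matrix.one_mul]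
  have hconj : ∀ a : k → ℂ, (U * Matrix.diagonal a * star U)ᴴ
      = U * Matrix.diagonal (star a) * star U := by
    intro a
    simp [Matrix.conjTranspose_mul, Matrix.mul_assoc, Matrix.diagonal_conjTranspose,
      Matrix.star_eq_conjTranspose]
  have hss : (fun i => s i * s i) = s := by
    funext i; by_cases h : hM.eigenvalues i = 0 <;> simp [hs, h]
  have hDs : (fun i => D i * s i) = D := by
    funext i; by_cases h : hM.eigenvalues i = 0 <;> simp [hs, hD, h]
  have hsD : (fun i => s i * D i) = D := by
    funext i; by_cases h : hM.eigenvalues i = 0 <;> simp [hs, hD, h]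
  have htD : (fun i => t i * D i) = s := by
    funext i
    by_cases h : hM.eigenvalues i = 0
    · simp [ht, hs, hD, h]
    · simp only [ht, hs, hD, Function.comp_apply, if_neg h]
      exact inv_mul_cancel₀ (Complex.ofReal_ne_zero.mpr h)
  have hDt : (fun i => D i * t i) = s := by
    funext i
    by_cases h : hM.eigenvalues i = 0
    · simp [ht, hs, hD, h]
    · simp only [ht, hs, hD, Function.comp_apply, if_neg h]
      exact mul_inv_cancel₀ (Complex.ofReal_ne_zero.mpr h)
  have hstar : star s = s := by
    funext i; by_cases h : hM.eigenvalues i = 0 <;> simp [hs, h, Pi.star_apply]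
  refine ⟨U * Matrix.diagonal s * star U, U * Matrix.diagonal t * star U, ?_, ?_, ?_, ?_, ?_, ?_⟩
  · rw [hconj, hstar]
  · rw [hmul, hss]
  · conv_lhs => rw [hspec]
    rw [hmul, hDs, ← hspec]
  · conv_lhs => rw [hspec]
    rw [hmul, hsD, ← hspec]
  · conv_lhs => rw [hspec]
    rw [hmul, htD]
  · conv_lhs => rw [hspec]
    rw [hmul, hDt]



lemma fix_of_range {k : Type*} [Fintype k] [DecidableEq k] {q A : Matrix k k ℂ} (hq : q * q = q)
    (h : LinearMap.range (Matrix.toLin' A) ≤ LinearMap.range (Matrix.toLin' q)) : q * A = A := by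
  have key : Matrix.toLin' (q * A) = Matrix.toLin' A := by
    rw [Matrix.toLin'_mul]
    refine LinearMap.ext fun x => ?_
    obtain ⟨y, hy⟩ := h (LinearMap.mem_range_self _ x)
    simp only [LinearMap.comp_apply]
    rw [← hy, ← LinearMap.comp_apply, ← Matrix.toLin'_mul, hq]
  exact Matrix.toLin'.injective key

lemma range_mul_le {k : Type*} [Fintype k] [DecidableEq k] (A B : Matrix k k ℂ) :
    LinearMap.range (Matrix.toLin' (A * B)) ≤ LinearMap.range (Matrix.toLin' A) := by
  rw [Matrix.toLin'_mul]
  exact LinearMap.range_comp_le_range _ _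

lemma conjTranspose_mem_of_posGen {k : Type*} [Fintype k] {J : Submodule ℂ (Matrix k k ℂ)}
    (hJ : PositivelyGenerated J) {a : Matrix k k ℂ} (ha : a ∈ J) : aᴴ ∈ J := by
  let J' : Submodule ℂ (Matrix k k ℂ) :=
    { carrier := {x | xᴴ ∈ J}
      add_mem' := fun hx hy => by
        simp only [Set.mem_setOf_eq, Matrix.conjTranspose_add] at *
        exact J.add_mem hx hy
      zero_mem' := by simp
      smul_mem' := fun c x hx => by
        simp only [Set.mem_setOf_eq, Matrix.conjTranspose_smul] at *
        exact J.smul_mem _ hx }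
  have hle : J ≤ J' := by
    conv_lhs => rw [hJ]
    rw [Submodule.span_le]
    rintro x ⟨hxJ, hxP⟩
    show xᴴ ∈ J
    rw [hxP.1.eq]
    exact hxJ
  exact hle ha

lemma comprMap_eq_sandwich {k : Type*} [Fintype k] {q : Matrix k k ℂ} (hq : qᴴ = q) :
    comprMap q = sandwich q := by
  refine LinearMap.ext fun a => ?_
  show q * a * q = q * a * qᴴ
  rw [hq]

/-- for a minimal decomposition `Φ = Λ_q ∘ χ_c` of a generalized channel,
`Φ` is extremal in `C_J(A,B)` iff `Λ_q` is extremal in `C_{cJc*}(A_q,B)`.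
Here maps on `A_q = qAq` are modelled as maps on `A` that factor through the
compression by `q`. -/
theorem extreme_iff_extreme_of_minimal_decomposition
    (J : Submodule ℂ (Matrix n n ℂ)) (hJ : PositivelyGenerated J)
    (Φ Λ : Matrix n n ℂ →ₗ[ℂ] Matrix m m ℂ) (c q : Matrix n n ℂ)
    (hq : IsSupportProj (c * cᴴ) q)
    (hdecomp : Φ = Λ ∘ₗ sandwich c)
    (hc : cᴴ * c - 1 ∈ hsPerp J)
    (hΛCP : (choi Λ).PosSemidef)
    (hΛq : Λ ∘ₗ comprMap q = Λ)
    (hΛch : ∀ a : Matrix n n ℂ, q * a * q = a → Matrix.trace (Λ a) = Matrix.trace a) :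
    Φ ∈ Set.extremePoints ℝ
        {Ψ : Matrix n n ℂ →ₗ[ℂ] Matrix m m ℂ |
          (choi Ψ).PosSemidef ∧ ∀ a ∈ J, Matrix.trace (Ψ a) = Matrix.trace a} ↔
      Λ ∈ Set.extremePoints ℝ
        {Ψ : Matrix n n ℂ →ₗ[ℂ] Matrix m m ℂ |
          (choi Ψ).PosSemidef ∧ Ψ ∘ₗ comprMap q = Ψ ∧
            ∀ a ∈ J, Matrix.trace (Ψ (c * a * cᴴ)) = Matrix.trace (c * a * cᴴ)} := by
  classical
  -- facts about q
  obtain ⟨q', w', hq'H, hq'q', hNq', hq'N, hw'N, hNw'⟩ :=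
    exists_support (c * cᴴ) (Matrix.isHermitian_mul_conjTranspose_self c)
  have hqH : qᴴ = q := hq.1
  have h1 : LinearMap.range (Matrix.toLin' q') ≤ LinearMap.range (Matrix.toLin' q) := by
    rw [hq.2.2, ← hNw']
    exact range_mul_le _ _
  have hqq' : q * q' = q' := fix_of_range hq.2.1 h1
  have h2 : LinearMap.range (Matrix.toLin' q) ≤ LinearMap.range (Matrix.toLin' q') := by
    rw [hq.2.2]
    conv_lhs => rw [← hq'N]
    exact range_mul_le _ _
  have hq'q : q' * q = q := fix_of_range hq'q' h2
  have hqeq : q = q' := by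
    have h3 := congrArg Matrix.conjTranspose hq'q
    rw [Matrix.conjTranspose_mul, hqH, hq'H] at h3
    rw [← h3, hqq']
  have hqc : q * c = c := by
    rw [hqeq]
    have h4 : (1 - q') * (c * cᴴ) = 0 := by
      rw [Matrix.sub_mul, Matrix.one_mul, hq'N, sub_self]
    have h0 : ((1 - q') * c) * ((1 - q') * c)ᴴ = 0 := by
      rw [Matrix.conjTranspose_mul]
      calc (1 - q') * c * (cᴴ * (1 - q')ᴴ) = ((1 - q') * (c * cᴴ)) * (1 - q')ᴴ := by
            simp only [Matrix.mul_assoc]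
        _ = 0 := by rw [h4, Matrix.zero_mul]
    have h5 : (1 - q') * c = 0 := Matrix.self_mul_conjTranspose_eq_zero.mp h0
    rw [Matrix.sub_mul, Matrix.one_mul] at h5
    exact (sub_eq_zero.mp h5).symm
  have hcq : cᴴ * q = cᴴ := by
    have h3 := congrArg Matrix.conjTranspose hqc
    rwa [Matrix.conjTranspose_mul, hqH] at h3
  have hcd : ∃ d, c * d = q := by
    refine ⟨cᴴ * w', ?_⟩
    rw [← Matrix.mul_assoc, hNw', hqeq]
  -- facts about p
  obtain ⟨p, w, hpH, hpp, hMp, hpM, hwM, hMw⟩ :=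
    exists_support (cᴴ * c) (by simpa using Matrix.isHermitian_mul_conjTranspose_self cᴴ)
  have hcp : c * p = c := by
    have h4 : (cᴴ * c) * (1 - p) = 0 := by
      rw [Matrix.mul_sub, Matrix.mul_one, hMp, sub_self]
    have h0 : (c * (1 - p))ᴴ * (c * (1 - p)) = 0 := by
      rw [Matrix.conjTranspose_mul]
      have hP1 : (1 - p)ᴴ = 1 - p := by
        rw [Matrix.conjTranspose_sub, Matrix.conjTranspose_one, hpH]
      calc (1 - p)ᴴ * cᴴ * (c * (1 - p)) = (1 - p)ᴴ * ((cᴴ * c) * (1 - p)) := by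
            simp only [Matrix.mul_assoc]
        _ = 0 := by rw [h4, Matrix.mul_zero]
    have h5 : c * (1 - p) = 0 := Matrix.conjTranspose_mul_self_eq_zero.mp h0
    rw [Matrix.mul_sub, Matrix.mul_one] at h5
    exact (sub_eq_zero.mp h5).symm
  set e : Matrix n n ℂ := w * cᴴ with he
  have hec : e * c = p := by rw [he, Matrix.mul_assoc, hwM]
  have heq' : e * q = e := by rw [he, Matrix.mul_assoc, hcq]
  -- star-closedness and trace identity
  have htr : ∀ a ∈ J, Matrix.trace (c * a * cᴴ) = Matrix.trace a := by
    intro a ha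
    have h1' : Matrix.trace ((aᴴ)ᴴ * (cᴴ * c - 1)) = 0 := hc (aᴴ) (conjTranspose_mem_of_posGen hJ ha)
    rw [Matrix.conjTranspose_conjTranspose, Matrix.mul_sub, Matrix.mul_one,
      Matrix.trace_sub] at h1'
    have h2' : Matrix.trace (c * a * cᴴ) = Matrix.trace (a * (cᴴ * c)) := by
      rw [Matrix.trace_mul_cycle, Matrix.trace_mul_comm]
    rw [h2']
    exact sub_eq_zero.mp h1'
  -- q-compression of c a cᴴ
  have hqcomp : ∀ a : Matrix n n ℂ, q * (c * a * cᴴ) * q = c * a * cᴴ := by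
    intro a
    have hl : q * (c * a * cᴴ) = c * a * cᴴ := by
      rw [← Matrix.mul_assoc, ← Matrix.mul_assoc, hqc]
    have hr : (c * a * cᴴ) * q = c * a * cᴴ := by
      rw [Matrix.mul_assoc, hcq]
    rw [hl, hr]
  -- injectivity on q-invariant maps
  have hinj : ∀ Θ₁ Θ₂ : Matrix n n ℂ →ₗ[ℂ] Matrix m m ℂ,
      Θ₁ ∘ₗ comprMap q = Θ₁ → Θ₂ ∘ₗ comprMap q = Θ₂ →
      Θ₁ ∘ₗ sandwich c = Θ₂ ∘ₗ sandwich c → Θ₁ = Θ₂ := by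
    intro Θ₁ Θ₂ hΘ₁ hΘ₂ hcc
    obtain ⟨d, hd⟩ := hcd
    have key : ∀ Θ : Matrix n n ℂ →ₗ[ℂ] Matrix m m ℂ, Θ ∘ₗ comprMap q = Θ →
        (Θ ∘ₗ sandwich c) ∘ₗ sandwich d = Θ := by
      intro Θ hΘ
      rw [LinearMap.comp_assoc, sandwich_comp, hd, ← comprMap_eq_sandwich hqH, hΘ]
    rw [← key Θ₁ hΘ₁, ← key Θ₂ hΘ₂, hcc]
  -- membership of Φ
  have hΦchoi : (choi Φ).PosSemidef := by
    rw [hdecomp, choi_comp_sandwich]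
    exact hΛCP.conjTranspose_mul_mul_same _
  have hΦtr : ∀ a ∈ J, Matrix.trace (Φ a) = Matrix.trace a := by
    intro a ha
    rw [hdecomp]
    show Matrix.trace (Λ (c * a * cᴴ)) = Matrix.trace a
    rw [hΛch (c * a * cᴴ) (hqcomp a)]
    exact htr a ha
  -- T-membership implies S-membership after composition
  have hTS : ∀ Θ : Matrix n n ℂ →ₗ[ℂ] Matrix m m ℂ, (choi Θ).PosSemidef →
      (∀ a ∈ J, Matrix.trace (Θ (c * a * cᴴ)) = Matrix.trace (c * a * cᴴ)) →
      (choi (Θ ∘ₗ sandwich c)).PosSemidef ∧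
        ∀ a ∈ J, Matrix.trace ((Θ ∘ₗ sandwich c) a) = Matrix.trace a := by
    intro Θ hΘ1 hΘ2
    constructor
    · rw [choi_comp_sandwich]
      exact hΘ1.conjTranspose_mul_mul_same _
    · intro a ha
      show Matrix.trace (Θ (c * a * cᴴ)) = Matrix.trace a
      rw [hΘ2 a ha]
      exact htr a ha
  constructor
  · rintro ⟨hΦS, hΦext⟩
    refine ⟨⟨hΛCP, hΛq, fun a _ => hΛch (c * a * cᴴ) (hqcomp a)⟩, ?_⟩
    rintro Λ₁ hΛ₁ Λ₂ hΛ₂ ⟨a, b, ha, hb, hab, hsum⟩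
    have h₁S := hTS Λ₁ hΛ₁.1 hΛ₁.2.2
    have h₂S := hTS Λ₂ hΛ₂.1 hΛ₂.2.2
    have hcomb : a • (Λ₁ ∘ₗ sandwich c) + b • (Λ₂ ∘ₗ sandwich c) = Φ := by
      rw [← LinearMap.smul_comp, ← LinearMap.smul_comp, ← LinearMap.add_comp, hsum, ← hdecomp]
    have hΦseg := hΦext h₁S h₂S ⟨a, b, ha, hb, hab, hcomb⟩
    refine hinj Λ₁ Λ hΛ₁.2.1 hΛq ?_
    rw [hΦseg, hdecomp]
  · rintro ⟨hΛT, hΛext⟩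
    refine ⟨⟨hΦchoi, hΦtr⟩, ?_⟩
    rintro Ψ₁ hΨ₁ Ψ₂ hΨ₂ ⟨a, b, ha, hb, hab, hsum⟩
    have hchoi_eq : choi Φ = a • choi Ψ₁ + b • choi Ψ₂ := by
      rw [← hsum, choi_real_combo]
    have hkey : ∀ (t u : ℝ) (Ψ Ψ' : Matrix n n ℂ →ₗ[ℂ] Matrix m m ℂ), 0 < t → 0 ≤ u →
        (choi Ψ).PosSemidef → (choi Ψ').PosSemidef →
        choi Φ = t • choi Ψ + u • choi Ψ' → Ψ ∘ₗ sandwich p = Ψ := by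
      intro t u Ψ Ψ' ht hu hΨ hΨ' heqc
      have hYX : ((t⁻¹ • choi Φ) - choi Ψ).PosSemidef := by
        have hYXeq : (t⁻¹ • choi Φ) - choi Ψ = (t⁻¹ * u) • choi Ψ' := by
          rw [heqc, smul_add, smul_smul, inv_mul_cancel₀ ht.ne', one_smul, smul_smul,
            add_sub_cancel_left]
        rw [hYXeq]
        exact posSemidef_real_smul hΨ' (by positivity)
      have hYP : (t⁻¹ • choi Φ) * liftE p = t⁻¹ • choi Φ := by
        rw [Matrix.smul_mul]
        congr 1
        rw [hdecomp, choi_comp_sandwich, Matrix.mul_assoc, liftE_mul, hcp]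
      have hPH : (liftE p : Matrix (m × n) (m × n) ℂ)ᴴ = liftE p := by
        rw [liftE_conjTranspose, hpH]
      have hsup := support_dom hΨ hYX hYP hPH
      apply choi_inj
      rw [choi_comp_sandwich]
      exact hsup
    have hs₁ : Ψ₁ ∘ₗ sandwich p = Ψ₁ := hkey a b Ψ₁ Ψ₂ ha hb.le hΨ₁.1 hΨ₂.1 hchoi_eq
    have hs₂ : Ψ₂ ∘ₗ sandwich p = Ψ₂ :=
      hkey b a Ψ₂ Ψ₁ hb ha.le hΨ₂.1 hΨ₁.1 (by rw [hchoi_eq, add_comm])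
    have hLc : ∀ (Ψ : Matrix n n ℂ →ₗ[ℂ] Matrix m m ℂ), Ψ ∘ₗ sandwich p = Ψ →
        ((Ψ ∘ₗ sandwich e) ∘ₗ sandwich c) = Ψ := by
      intro Ψ hs
      rw [LinearMap.comp_assoc, sandwich_comp, hec, hs]
    have hL₁c := hLc Ψ₁ hs₁
    have hL₂c := hLc Ψ₂ hs₂
    have hLT : ∀ (Ψ : Matrix n n ℂ →ₗ[ℂ] Matrix m m ℂ), (choi Ψ).PosSemidef →
        (∀ a' ∈ J, Matrix.trace (Ψ a') = Matrix.trace a') →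
        ((Ψ ∘ₗ sandwich e) ∘ₗ sandwich c) = Ψ →
        (choi (Ψ ∘ₗ sandwich e)).PosSemidef ∧ (Ψ ∘ₗ sandwich e) ∘ₗ comprMap q = Ψ ∘ₗ sandwich e ∧
          ∀ a' ∈ J, Matrix.trace ((Ψ ∘ₗ sandwich e) (c * a' * cᴴ)) = Matrix.trace (c * a' * cᴴ) := by
      intro Ψ hP htrΨ hcΨ
      refine ⟨?_, ?_, ?_⟩
      · rw [choi_comp_sandwich]
        exact hP.conjTranspose_mul_mul_same _
      · rw [comprMap_eq_sandwich hqH, LinearMap.comp_assoc, sandwich_comp, heq']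
      · intro a' ha'
        rw [show (Ψ ∘ₗ sandwich e) (c * a' * cᴴ) = Ψ a' from LinearMap.congr_fun hcΨ a',
          htrΨ a' ha']
        exact (htr a' ha').symm
    have hL₁T := hLT Ψ₁ hΨ₁.1 hΨ₁.2 hL₁c
    have hL₂T := hLT Ψ₂ hΨ₂.1 hΨ₂.2 hL₂c
    have hcombo : a • (Ψ₁ ∘ₗ sandwich e) + b • (Ψ₂ ∘ₗ sandwich e) = Λ := by
      apply hinj
      · rw [LinearMap.add_comp, LinearMap.smul_comp, LinearMap.smul_comp, hL₁T.2.1, hL₂T.2.1]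
      · exact hΛq
      · rw [LinearMap.add_comp, LinearMap.smul_comp, LinearMap.smul_comp, hL₁c, hL₂c, hsum,
          ← hdecomp]
    have hfin := hΛext hL₁T hL₂T ⟨a, b, ha, hb, hab, hcombo⟩
    rw [← hL₁c, hfin, ← hdecomp]
end

section
/- Let J = S^{-1}(C ρ₀) where S : A → A₀ is a channel whose adjoint S* : A₀ → A is an injective *-homomorphism, and ρ₀ = S(ρ) for some invertible state ρ ∈ A. Then a positive element d ∈ A satisfies d ∈ (I_A + J^⊥) ∩ A^+ if and only if d = S*(b₀²) where b₀ = σ₀^{1/2}(σ₀^{1/2} ρ₀ σ₀^{1/2})^{-1/2} σ₀^{1/2} for some state σ₀ ∈ A₀. -/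
open Matrix ComplexOrder

variable {n m : Type*} [Fintype n] [DecidableEq n] [Fintype m] [DecidableEq m]

open scoped Classical

/-- Positive square root of a positive semidefinite matrix (junk value `0` otherwise). -/
noncomputable def msqrt {k : Type*} [Fintype k] [DecidableEq k] (x : Matrix k k ℂ) :
    Matrix k k ℂ :=
  if h : x.PosSemidef then
    (h.1.eigenvectorUnitary : Matrix k k ℂ) *
      Matrix.diagonal ((↑) ∘ (√·) ∘ h.1.eigenvalues) *
      (star h.1.eigenvectorUnitary : Matrix k k ℂ)
  else 0

/-- `x^{-1/2}`, with the inverse taken on the support of `x` (for Hermitian `x`;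
junk value `0` otherwise). -/
noncomputable def invSqrtOnSupp {k : Type*} [Fintype k] [DecidableEq k]
    (x : Matrix k k ℂ) : Matrix k k ℂ :=
  if h : x.IsHermitian then
    (h.eigenvectorUnitary : Matrix k k ℂ) *
      Matrix.diagonal (fun i => ((Real.sqrt (h.eigenvalues i) : ℂ))⁻¹) *
      (star h.eigenvectorUnitary : Matrix k k ℂ)
  else 0

/-- The expression `b₀ = σ₀^{1/2} (σ₀^{1/2} ρ₀ σ₀^{1/2})^{-1/2} σ₀^{1/2}`. -/
noncomputable def bform {k : Type*} [Fintype k] [DecidableEq k]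
    (ρ₀ σ₀ : Matrix k k ℂ) : Matrix k k ℂ :=
  msqrt σ₀ * invSqrtOnSupp (msqrt σ₀ * ρ₀ * msqrt σ₀) * msqrt σ₀

section ChpHelpers

variable {k : Type*} [Fintype k]

lemma chp_trace_conj_swap {l : Type*} [Fintype l] (a b : Matrix k l ℂ) :
    Matrix.trace (aᴴ * b) = (starRingEnd ℂ) (Matrix.trace (bᴴ * a)) := by
  show _ = star (Matrix.trace (bᴴ * a))
  rw [← Matrix.trace_conjTranspose, Matrix.conjTranspose_mul, Matrix.conjTranspose_conjTranspose]

lemma chp_trace_self_eq {l : Type*} [Fintype l] (x : Matrix k l ℂ) :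
    Matrix.trace (xᴴ * x) = ((∑ j, ∑ i, Complex.normSq (x i j) : ℝ) : ℂ) := by
  push_cast
  simp only [Matrix.trace, Matrix.mul_apply, Matrix.diag, Matrix.conjTranspose_apply,
    Matrix.diag_apply]
  refine Finset.sum_congr rfl fun j _ => Finset.sum_congr rfl fun i _ => ?_
  rw [Complex.normSq_eq_conj_mul_self]; rfl

lemma chp_trace_self_pos {l : Type*} [Fintype l] (x : Matrix k l ℂ) (hx : x ≠ 0) :
    0 < Matrix.trace (xᴴ * x) := by
  rw [chp_trace_self_eq, Complex.zero_lt_real]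
  have : ∃ i j, x i j ≠ 0 := by
    by_contra h
    push_neg at h
    exact hx (Matrix.ext fun i j => h i j)
  obtain ⟨i, j, hij⟩ := this
  have h1 : 0 < Complex.normSq (x i j) := Complex.normSq_pos.2 hij
  calc 0 < Complex.normSq (x i j) := h1
    _ ≤ ∑ i, Complex.normSq (x i j) :=
        Finset.single_le_sum (f := fun i => Complex.normSq (x i j))
          (fun i _ => Complex.normSq_nonneg _) (Finset.mem_univ i)
    _ ≤ ∑ j, ∑ i, Complex.normSq (x i j) :=
        Finset.single_le_sum (f := fun j => ∑ i, Complex.normSq (x i j))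
          (fun j _ => Finset.sum_nonneg fun i _ => Complex.normSq_nonneg _) (Finset.mem_univ j)

lemma chp_trace_self_zero {l : Type*} [Fintype l] {x : Matrix k l ℂ}
    (h : Matrix.trace (xᴴ * x) = 0) : x = 0 := by
  by_contra hx
  exact (chp_trace_self_pos x hx).ne' h

noncomputable def chp_mEquiv (k : Type*) [Fintype k] :
    Matrix k k ℂ ≃ₗ[ℂ] EuclideanSpace ℂ (k × k) :=
  (LinearEquiv.curry ℂ ℂ k k).symm.trans (WithLp.linearEquiv 2 ℂ ((k × k) → ℂ)).symm

lemma chp_mEquiv_inner (x y : Matrix k k ℂ) :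
    inner ℂ (chp_mEquiv k x) (chp_mEquiv k y) = Matrix.trace (xᴴ * y) := by
  simp only [chp_mEquiv, LinearEquiv.trans_apply, PiLp.inner_apply, RCLike.inner_apply,
    Matrix.trace, Matrix.mul_apply, Matrix.conjTranspose_apply, Matrix.diag_apply,
    Fintype.sum_prod_type]
  rw [Finset.sum_comm]
  refine Finset.sum_congr rfl fun i _ => Finset.sum_congr rfl fun j _ => ?_
  rw [mul_comm]
  rfl

lemma chp_perp_extract {l : Type*} [Fintype l]
    (T : Matrix l l ℂ →ₗ[ℂ] Matrix k k ℂ) (W : Submodule ℂ (Matrix l l ℂ)) (x : Matrix k k ℂ)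
    (hx : ∀ a : Matrix k k ℂ, (∀ c ∈ W, Matrix.trace ((T c)ᴴ * a) = 0) →
      Matrix.trace (aᴴ * x) = 0) :
    ∃ c ∈ W, T c = x := by
  classical
  set ψ := chp_mEquiv k
  set K : Submodule ℂ (EuclideanSpace ℂ (k × k)) :=
    Submodule.map (ψ : Matrix k k ℂ →ₗ[ℂ] EuclideanSpace ℂ (k × k)) (Submodule.map T W) with hK
  have hmem : ψ x ∈ Kᗮᗮ := by
    rw [Submodule.mem_orthogonal]
    intro z hz
    have hza : z = ψ (ψ.symm z) := (ψ.apply_symm_apply z).symm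
    rw [hza, chp_mEquiv_inner]
    apply hx
    intro c hc
    have hu : ψ (T c) ∈ K := Submodule.mem_map_of_mem (Submodule.mem_map_of_mem hc)
    have := hz _ hu
    rwa [hza, chp_mEquiv_inner] at this
  rw [Submodule.orthogonal_orthogonal] at hmem
  rw [hK] at hmem
  rcases Submodule.mem_map.1 hmem with ⟨u, hu, huψ⟩
  rcases Submodule.mem_map.1 hu with ⟨c, hc, hcu⟩
  refine ⟨c, hc, ?_⟩
  have : u = x := ψ.injective huψ
  rw [hcu, this]

variable [DecidableEq k]

lemma chp_conjdiag {U : Matrix k k ℂ} (hU : star U * U = 1) (f g : k → ℂ) :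
    (U * Matrix.diagonal f * star U) * (U * Matrix.diagonal g * star U)
      = U * Matrix.diagonal (fun i => f i * g i) * star U := by
  have h1 : Matrix.diagonal f * (star U * U) * Matrix.diagonal g
      = Matrix.diagonal fun i => f i * g i := by
    rw [hU, Matrix.mul_one, Matrix.diagonal_mul_diagonal]
  calc (U * Matrix.diagonal f * star U) * (U * Matrix.diagonal g * star U)
      = U * (Matrix.diagonal f * (star U * U) * Matrix.diagonal g) * star U := by
        simp only [Matrix.mul_assoc]
    _ = U * Matrix.diagonal (fun i => f i * g i) * star U := by rw [h1]

lemma chp_conjdiag_add (U : Matrix k k ℂ) (f g : k → ℂ) :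
    U * Matrix.diagonal f * star U + U * Matrix.diagonal g * star U
      = U * Matrix.diagonal (fun i => f i + g i) * star U := by
  rw [← Matrix.add_mul, ← Matrix.mul_add, Matrix.diagonal_add]

lemma chp_diag_real_herm (f : k → ℝ) :
    (Matrix.diagonal (fun i => (f i : ℂ)))ᴴ = Matrix.diagonal (fun i => (f i : ℂ)) := by
  rw [Matrix.diagonal_conjTranspose]
  congr 1
  funext i
  simp [Pi.star_def, Complex.conj_ofReal]

lemma chp_conjreal_herm (U : Matrix k k ℂ) (f : k → ℝ) :
    (U * Matrix.diagonal (fun i => (f i : ℂ)) * star U).IsHermitian := by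
  rw [Matrix.IsHermitian]
  calc (U * Matrix.diagonal (fun i => (f i : ℂ)) * star U)ᴴ
      = (star U)ᴴ * (Matrix.diagonal (fun i => (f i : ℂ)))ᴴ * Uᴴ := by
        rw [Matrix.conjTranspose_mul (U * Matrix.diagonal (fun i => (f i : ℂ))) (star U),
          Matrix.conjTranspose_mul U (Matrix.diagonal (fun i => (f i : ℂ))), Matrix.mul_assoc]
    _ = U * Matrix.diagonal (fun i => (f i : ℂ)) * star U := by
        rw [chp_diag_real_herm, Matrix.star_eq_conjTranspose, Matrix.conjTranspose_conjTranspose]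

lemma chp_conjreal_psd (U : Matrix k k ℂ) {f : k → ℝ} (hf : ∀ i, 0 ≤ f i) :
    (U * Matrix.diagonal (fun i => (f i : ℂ)) * star U).PosSemidef := by
  have h1 : (Matrix.diagonal (fun i => (f i : ℂ))).PosSemidef := by
    rw [Matrix.posSemidef_diagonal_iff]
    intro i
    rw [Complex.zero_le_real]
    exact hf i
  have := h1.mul_mul_conjTranspose_same U
  rwa [Matrix.star_eq_conjTranspose]

lemma chp_conjback {U : Matrix k k ℂ} (hU : star U * U = 1) (f : k → ℂ) :
    star U * (U * Matrix.diagonal f * star U) * U = Matrix.diagonal f := by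
  calc star U * (U * Matrix.diagonal f * star U) * U
      = (star U * U) * Matrix.diagonal f * (star U * U) := by simp only [Matrix.mul_assoc]
    _ = Matrix.diagonal f := by rw [hU]; simp

noncomputable def Matrix.PosSemidef.sqrt {A : Matrix k k ℂ} (h : A.PosSemidef) : Matrix k k ℂ :=
  (h.1.eigenvectorUnitary : Matrix k k ℂ) *
    Matrix.diagonal ((↑) ∘ (√·) ∘ h.1.eigenvalues) *
    (star h.1.eigenvectorUnitary : Matrix k k ℂ)

lemma Matrix.PosSemidef.posSemidef_sqrt {A : Matrix k k ℂ} (h : A.PosSemidef) :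
    h.sqrt.PosSemidef := by
  have := chp_conjreal_psd (h.1.eigenvectorUnitary : Matrix k k ℂ)
    (f := fun i => √(h.1.eigenvalues i)) (fun i => Real.sqrt_nonneg _)
  unfold Matrix.PosSemidef.sqrt
  exact this

lemma Matrix.PosSemidef.sqrt_mul_self {A : Matrix k k ℂ} (h : A.PosSemidef) :
    h.sqrt * h.sqrt = A := by
  have hU : star (h.1.eigenvectorUnitary : Matrix k k ℂ) * h.1.eigenvectorUnitary = 1 :=
    Matrix.mem_unitaryGroup_iff'.mp h.1.eigenvectorUnitary.2
  unfold Matrix.PosSemidef.sqrt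
  rw [chp_conjdiag hU]
  conv_rhs => rw [h.1.spectral_theorem, Unitary.conjStarAlgAut_apply]
  congr 2
  congr 1
  funext i
  simp only [Function.comp_apply]
  rw [← Complex.ofReal_mul, Real.mul_self_sqrt (h.eigenvalues_nonneg i)]
  rfl

section SqrtUniq
open scoped MatrixOrder

lemma Matrix.PosSemidef.eq_of_sq_eq_sq {A B : Matrix k k ℂ} (hA : A.PosSemidef)
    (hB : B.PosSemidef) (h : A ^ 2 = B ^ 2) : A = B := by
  rw [← CFC.sqrt_sq A hA.nonneg, h, CFC.sqrt_sq B hB.nonneg]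

end SqrtUniq

lemma chp_sqrt_det_isUnit {ρ : Matrix k k ℂ} (hρ : ρ.PosDef) :
    IsUnit (hρ.posSemidef.sqrt).det := by
  have hrr : hρ.posSemidef.sqrt * hρ.posSemidef.sqrt = ρ := hρ.posSemidef.sqrt_mul_self
  have hrd : ρ.det = (hρ.posSemidef.sqrt).det * (hρ.posSemidef.sqrt).det := by
    have h2 := congrArg Matrix.det hrr
    rw [Matrix.det_mul] at h2
    exact h2.symm
  have hd := hρ.det_pos
  rw [isUnit_iff_ne_zero]
  intro h0
  rw [hrd, h0, mul_zero] at hd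
  exact lt_irrefl _ hd

lemma chp_pairing {ρ X : Matrix k k ℂ} (hρ : ρ.PosDef) (hX : X.PosSemidef) (hXne : X ≠ 0) :
    0 < Matrix.trace (X * ρ) := by
  obtain ⟨B, hB⟩ : ∃ B : Matrix k k ℂ, X = Bᴴ * B :=
    ⟨hX.sqrt, by rw [hX.posSemidef_sqrt.isHermitian.eq, hX.sqrt_mul_self]⟩
  set r : Matrix k k ℂ := hρ.posSemidef.sqrt with hrdef
  have hrr : r * r = ρ := hρ.posSemidef.sqrt_mul_self
  have hrH : rᴴ = r := hρ.posSemidef.posSemidef_sqrt.isHermitian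
  have hdet : IsUnit r.det := chp_sqrt_det_isUnit hρ
  have hBr : B * r ≠ 0 := by
    intro h0
    apply hXne
    have hB0 : B = 0 := by
      have h2 := congrArg (fun Z => Z * r⁻¹) h0
      simpa [Matrix.mul_assoc, Matrix.mul_nonsing_inv r hdet] using h2
    rw [hB, hB0]
    simp
  have e1 : Matrix.trace (X * ρ) = Matrix.trace ((B * ρ) * Bᴴ) := by
    rw [hB, Matrix.mul_assoc, Matrix.trace_mul_comm]
  have e2 : Matrix.trace ((B * r)ᴴ * (B * r)) = Matrix.trace ((B * ρ) * Bᴴ) := by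
    rw [Matrix.trace_mul_comm, Matrix.conjTranspose_mul B r, hrH, ← hrr]
    simp only [Matrix.mul_assoc]
  rw [e1, ← e2]
  exact chp_trace_self_pos _ hBr

lemma chp_psd_neg_zero {X : Matrix k k ℂ} (h1 : X.PosSemidef) (h2 : (-X).PosSemidef) :
    X = 0 := by
  have hz : ∀ x : k → ℂ, X *ᵥ x = 0 := by
    intro x
    rw [← h1.dotProduct_mulVec_zero_iff x]
    have a1 := h1.dotProduct_mulVec_nonneg x
    have a2 := h2.dotProduct_mulVec_nonneg x
    rw [Matrix.neg_mulVec] at a2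
    have a2' : 0 ≤ -(dotProduct (star x) (X *ᵥ x)) := by
      rwa [← dotProduct_neg]
    exact le_antisymm (neg_nonneg.mp a2') a1
  ext i j
  have h3 := congrFun (hz (Pi.single j 1)) i
  simpa using h3

lemma chp_key {ρ₀ σ₀ : Matrix k k ℂ} (hρ : ρ₀.PosDef) (hσ : σ₀.PosSemidef) :
    (bform ρ₀ σ₀).PosSemidef ∧ bform ρ₀ σ₀ * ρ₀ * bform ρ₀ σ₀ = σ₀ := by
  have hsq : msqrt σ₀ = hσ.sqrt := dif_pos hσ
  set s : Matrix k k ℂ := msqrt σ₀ with hs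
  have hsPSD : s.PosSemidef := by rw [hsq]; exact hσ.posSemidef_sqrt
  have hsH : sᴴ = s := hsPSD.isHermitian
  have hss : s * s = σ₀ := by rw [hsq]; exact hσ.sqrt_mul_self
  set M : Matrix k k ℂ := s * ρ₀ * s with hM
  have hMPSD : M.PosSemidef := by
    have := hρ.posSemidef.mul_mul_conjTranspose_same s
    rwa [hsH] at this
  have hMH : M.IsHermitian := hMPSD.isHermitian
  set U : Matrix k k ℂ := (hMH.eigenvectorUnitary : Matrix k k ℂ) with hUdef
  have hU : star U * U = 1 := Matrix.mem_unitaryGroup_iff'.mp hMH.eigenvectorUnitary.2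
  have hU' : U * star U = 1 := Matrix.mem_unitaryGroup_iff.mp hMH.eigenvectorUnitary.2
  set lam : k → ℝ := hMH.eigenvalues with hlam
  have hspec : M = U * Matrix.diagonal (fun i => (lam i : ℂ)) * star U := by
    have := hMH.spectral_theorem
    rw [Unitary.conjStarAlgAut_apply] at this
    exact this
  have hN : invSqrtOnSupp M
      = U * Matrix.diagonal (fun i => ((Real.sqrt (lam i) : ℂ))⁻¹) * star U := by
    rw [invSqrtOnSupp, dif_pos hMH]
  set N : Matrix k k ℂ := U * Matrix.diagonal (fun i => ((Real.sqrt (lam i) : ℂ))⁻¹) * star U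
    with hNdef
  have hlamnn : ∀ i, 0 ≤ lam i := fun i => hMPSD.eigenvalues_nonneg i
  set chi : k → ℂ := fun i => if lam i = 0 then 0 else 1 with hchi
  have hfun' : ∀ i, ((Real.sqrt (lam i) : ℂ))⁻¹ * (lam i : ℂ) * ((Real.sqrt (lam i) : ℂ))⁻¹
      = chi i := by
    intro i
    by_cases h : lam i = 0
    · simp [hchi, h]
    · have hpos : 0 < lam i := lt_of_le_of_ne (hlamnn i) (Ne.symm h)
      have h1 : ((Real.sqrt (lam i) : ℂ)) ≠ 0 := by
        simp only [ne_eq, Complex.ofReal_eq_zero]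
        positivity
      have h2 : ((Real.sqrt (lam i) : ℂ)) * ((Real.sqrt (lam i) : ℂ)) = (lam i : ℂ) := by
        rw [← Complex.ofReal_mul, Real.mul_self_sqrt hpos.le]
      simp only [hchi, if_neg h]
      rw [← h2]
      field_simp
  have hNMN : N * M * N = U * Matrix.diagonal chi * star U := by
    rw [hspec, hNdef, chp_conjdiag hU, chp_conjdiag hU]
    simp only [hfun']
  set Q : Matrix k k ℂ := U * Matrix.diagonal (fun i => 1 - chi i) * star U with hQdef
  have hQH : Qᴴ = Q := by
    have hfq : (fun i => 1 - chi i) = fun i => (((if lam i = 0 then 1 else 0 : ℝ)) : ℂ) := by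
      funext i; by_cases h : lam i = 0 <;> simp [hchi, h]
    rw [hQdef, hfq]
    exact chp_conjreal_herm U _
  have hQMQ : Q * M * Q = 0 := by
    rw [hspec, hQdef, chp_conjdiag hU, chp_conjdiag hU]
    have hfq : (fun i => (1 - chi i) * (lam i : ℂ) * (1 - chi i)) = fun _ => (0 : ℂ) := by
      funext i; by_cases h : lam i = 0 <;> simp [hchi, h]
    rw [hfq]
    simp
  have hsQ : s * Q = 0 := by
    set r : Matrix k k ℂ := hρ.posSemidef.sqrt with hr
    have hrr : r * r = ρ₀ := hρ.posSemidef.sqrt_mul_self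
    have hrH : rᴴ = r := hρ.posSemidef.posSemidef_sqrt.isHermitian
    have hdet : IsUnit r.det := chp_sqrt_det_isUnit hρ
    have e1 : (r * s * Q)ᴴ = Q * s * r := by
      calc (r * s * Q)ᴴ = Qᴴ * (r * s)ᴴ := Matrix.conjTranspose_mul (r * s) Q
        _ = Qᴴ * (sᴴ * rᴴ) := by rw [Matrix.conjTranspose_mul r s]
        _ = Q * s * r := by rw [hQH, hsH, hrH, Matrix.mul_assoc Q s r]
    have hform : (r * s * Q)ᴴ * (r * s * Q) = Q * M * Q := by
      rw [e1, hM, ← hrr]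
      simp only [Matrix.mul_assoc]
    have h0 : (r * s * Q)ᴴ * (r * s * Q) = 0 := by rw [hform, hQMQ]
    have h1 : r * s * Q = 0 := Matrix.conjTranspose_mul_self_eq_zero.mp h0
    have hinv : r⁻¹ * r = 1 := Matrix.nonsing_inv_mul r hdet
    calc s * Q = (r⁻¹ * r) * (s * Q) := by rw [hinv, Matrix.one_mul]
      _ = r⁻¹ * (r * s * Q) := by simp only [Matrix.mul_assoc]
      _ = 0 := by rw [h1, Matrix.mul_zero]
  have hQs : Q * s = 0 := by
    have h4 := congrArg Matrix.conjTranspose hsQ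
    rwa [Matrix.conjTranspose_mul, hsH, hQH, Matrix.conjTranspose_zero] at h4
  have hPs : (U * Matrix.diagonal chi * star U) * s = s := by
    have hone : U * Matrix.diagonal (fun _ => (1 : ℂ)) * star U = 1 := by
      rw [Matrix.diagonal_one, Matrix.mul_one, hU']
    have hdiagsum : Matrix.diagonal (fun _ => (1 : ℂ))
        = Matrix.diagonal chi + Matrix.diagonal (fun i => 1 - chi i) := by
      rw [Matrix.diagonal_add]
      congr 1
      funext i
      ring
    have hsplit : U * Matrix.diagonal (fun _ => (1 : ℂ)) * star U
        = U * Matrix.diagonal chi * star U + Q := by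
      rw [hQdef, ← Matrix.add_mul, ← Matrix.mul_add, hdiagsum]
    have h5 : (1 : Matrix k k ℂ) * s = (U * Matrix.diagonal chi * star U) * s + Q * s := by
      rw [← hone, hsplit, Matrix.add_mul]
    rw [Matrix.one_mul, hQs, add_zero] at h5
    exact h5.symm
  have hbform : bform ρ₀ σ₀ = s * N * s := by rw [bform, ← hs, ← hM, hN]
  constructor
  · rw [hbform]
    have hNf : (fun i => ((Real.sqrt (lam i) : ℂ))⁻¹)
        = fun i => (((Real.sqrt (lam i))⁻¹ : ℝ) : ℂ) := by
      funext i
      rw [Complex.ofReal_inv]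
    have hNPSD : N.PosSemidef := by
      rw [hNdef, hNf]
      exact chp_conjreal_psd U (fun i => by positivity)
    have := hNPSD.mul_mul_conjTranspose_same s
    rwa [hsH] at this
  · rw [hbform]
    calc (s * N * s) * ρ₀ * (s * N * s)
        = s * (N * M * N) * s := by rw [hM]; simp only [Matrix.mul_assoc]
      _ = s * ((U * Matrix.diagonal chi * star U) * s) := by rw [hNMN, Matrix.mul_assoc]
      _ = s * s := by rw [hPs]
      _ = σ₀ := hss

lemma chp_uniq {ρ X Y : Matrix k k ℂ} (hρ : ρ.PosDef) (hX : X.PosSemidef) (hY : Y.PosSemidef)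
    (h : X * ρ * X = Y * ρ * Y) : X = Y := by
  set r : Matrix k k ℂ := hρ.posSemidef.sqrt with hr
  have hrr : r * r = ρ := hρ.posSemidef.sqrt_mul_self
  have hrH : rᴴ = r := hρ.posSemidef.posSemidef_sqrt.isHermitian
  have hdet : IsUnit r.det := chp_sqrt_det_isUnit hρ
  have hXc : (r * X * r).PosSemidef := by
    have := hX.mul_mul_conjTranspose_same r
    rwa [hrH] at this
  have hYc : (r * Y * r).PosSemidef := by
    have := hY.mul_mul_conjTranspose_same r
    rwa [hrH] at this
  have hsq : (r * X * r) ^ 2 = (r * Y * r) ^ 2 := by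
    rw [pow_two, pow_two]
    calc (r * X * r) * (r * X * r) = r * (X * ρ * X) * r := by
          rw [← hrr]; simp only [Matrix.mul_assoc]
      _ = r * (Y * ρ * Y) * r := by rw [h]
      _ = (r * Y * r) * (r * Y * r) := by rw [← hrr]; simp only [Matrix.mul_assoc]
  have heq : r * X * r = r * Y * r := hXc.eq_of_sq_eq_sq hYc hsq
  have h1 : r⁻¹ * (r * X * r) * r⁻¹ = r⁻¹ * (r * Y * r) * r⁻¹ := by rw [heq]
  have hinv : r⁻¹ * r = 1 := Matrix.nonsing_inv_mul r hdet
  have hinv' : r * r⁻¹ = 1 := Matrix.mul_nonsing_inv r hdet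
  calc X = r⁻¹ * (r * X * r) * r⁻¹ := by
        rw [Matrix.mul_assoc r X r, ← Matrix.mul_assoc r⁻¹ r (X * r), hinv, Matrix.one_mul,
          Matrix.mul_assoc, hinv', Matrix.mul_one]
    _ = r⁻¹ * (r * Y * r) * r⁻¹ := h1
    _ = Y := by
        rw [Matrix.mul_assoc r Y r, ← Matrix.mul_assoc r⁻¹ r (Y * r), hinv, Matrix.one_mul,
          Matrix.mul_assoc, hinv', Matrix.mul_one]

lemma chp_herm_psd_of_T {l k₂ : Type*} [Fintype l] [DecidableEq l] [Fintype k₂] [DecidableEq k₂]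
    (T : Matrix l l ℂ →ₗ[ℂ] Matrix k₂ k₂ ℂ)
    (hTmul : ∀ x y : Matrix l l ℂ, T (x * y) = T x * T y)
    (hTstar : ∀ x : Matrix l l ℂ, T xᴴ = (T x)ᴴ)
    (hTinj : Function.Injective T)
    {e : Matrix l l ℂ} (heH : e.IsHermitian) (hTe : (T e).PosSemidef) : e.PosSemidef := by
  set U : Matrix l l ℂ := (heH.eigenvectorUnitary : Matrix l l ℂ) with hUdef
  have hU : star U * U = 1 := Matrix.mem_unitaryGroup_iff'.mp heH.eigenvectorUnitary.2
  set lam : l → ℝ := heH.eigenvalues with hlam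
  have hspec : e = U * Matrix.diagonal (fun i => (lam i : ℂ)) * star U := by
    have := heH.spectral_theorem
    rw [Unitary.conjStarAlgAut_apply] at this
    exact this
  set neg : l → ℝ := fun i => max 0 (-(lam i)) with hneg
  set g : Matrix l l ℂ := U * Matrix.diagonal (fun i => ((neg i : ℝ) : ℂ)) * star U with hgdef
  set h : Matrix l l ℂ :=
    U * Matrix.diagonal (fun i => ((neg i * Real.sqrt (neg i) : ℝ) : ℂ)) * star U with hhdef
  have hgH : gᴴ = g := by rw [hgdef]; exact chp_conjreal_herm U _
  have hhH : hᴴ = h := by rw [hhdef]; exact chp_conjreal_herm U _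
  have hfun : ∀ i : l, (neg i : ℂ) * (lam i : ℂ) * (neg i : ℂ)
      + ((neg i * Real.sqrt (neg i) : ℝ) : ℂ) * ((neg i * Real.sqrt (neg i) : ℝ) : ℂ) = 0 := by
    intro i
    have hr : (neg i * lam i * neg i
        + (neg i * Real.sqrt (neg i)) * (neg i * Real.sqrt (neg i)) : ℝ) = 0 := by
      rcases le_or_gt 0 (lam i) with hc | hc
      · have h0 : neg i = 0 := by
          rw [hneg]
          exact max_eq_left (by linarith)
        rw [h0]
        ring
      · have h0 : neg i = -(lam i) := by
          rw [hneg]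
          exact max_eq_right (by linarith)
        rw [h0]
        have hs : Real.sqrt (-(lam i)) * Real.sqrt (-(lam i)) = -(lam i) :=
          Real.mul_self_sqrt (by linarith)
        linear_combination (lam i) * (lam i) * hs
    calc (neg i : ℂ) * (lam i : ℂ) * (neg i : ℂ)
        + ((neg i * Real.sqrt (neg i) : ℝ) : ℂ) * ((neg i * Real.sqrt (neg i) : ℝ) : ℂ)
        = ((neg i * lam i * neg i
            + (neg i * Real.sqrt (neg i)) * (neg i * Real.sqrt (neg i)) : ℝ) : ℂ) := by
          push_cast
          ring
      _ = 0 := by rw [hr]; norm_num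
  have hsum : g * e * g + h * h = 0 := by
    rw [hspec, hgdef, hhdef, chp_conjdiag hU, chp_conjdiag hU, chp_conjdiag hU,
      chp_conjdiag_add U]
    simp only [hfun]
    simp
  have hX : ((T g)ᴴ * T e * T g).PosSemidef := hTe.conjTranspose_mul_mul_same (T g)
  have hTgH : (T g)ᴴ = T g := by rw [← hTstar, hgH]
  have hXeq : (T g)ᴴ * T e * T g = T (g * e * g) := by rw [hTgH, ← hTmul, ← hTmul]
  have hgeg : g * e * g = -(h * h) := eq_neg_of_add_eq_zero_left hsum
  have hYpsd : (T (h * h)).PosSemidef := by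
    have h6 : T (h * h) = (T h)ᴴ * T h := by rw [hTmul, ← hTstar, hhH]
    rw [h6]
    exact Matrix.posSemidef_conjTranspose_mul_self _
  have hnegY : (-(T (h * h))).PosSemidef := by
    have h7 : -(T (h * h)) = (T g)ᴴ * T e * T g := by rw [hXeq, hgeg, map_neg]
    rw [h7]
    exact hX
  have hY0 : T (h * h) = 0 := chp_psd_neg_zero hYpsd hnegY
  have hhh0 : h * h = 0 := hTinj (by rw [hY0, map_zero])
  have hh0 : h = 0 := by
    have h8 : hᴴ * h = 0 := by rw [hhH]; exact hhh0
    exact Matrix.conjTranspose_mul_self_eq_zero.mp h8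
  have hdiag0 : Matrix.diagonal (fun i => ((neg i * Real.sqrt (neg i) : ℝ) : ℂ)) = 0 := by
    have h9 := chp_conjback hU (fun i => ((neg i * Real.sqrt (neg i) : ℝ) : ℂ))
    rw [← hhdef, hh0] at h9
    rw [← h9]
    simp
  have hlamnn : ∀ i, 0 ≤ lam i := by
    intro i
    by_contra hci
    push_neg at hci
    have h0 : neg i = -(lam i) := by
      rw [hneg]
      exact max_eq_right (by linarith)
    have h10 : ((neg i * Real.sqrt (neg i) : ℝ) : ℂ) = 0 := by
      have := congrFun (congrFun hdiag0 i) i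
      rwa [Matrix.diagonal_apply_eq] at this
    have hr : neg i * Real.sqrt (neg i) = 0 := by exact_mod_cast h10
    have hpos : 0 < neg i := by rw [h0]; linarith
    have h11 : 0 < neg i * Real.sqrt (neg i) := mul_pos hpos (Real.sqrt_pos.mpr hpos)
    rw [hr] at h11
    exact lt_irrefl _ h11
  exact heH.posSemidef_iff_eigenvalues_nonneg.mpr hlamnn

end ChpHelpers


/-- for `J = S⁻¹(ℂ ρ₀)` with `S` a channel whose Hilbert–Schmidt adjoint
`T = S*` is an injective unital *-homomorphism and `ρ₀ = S ρ` for an invertible state `ρ`,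
a positive `d` lies in `(I + J^⊥) ∩ A^+` iff `d = S*(b₀²)` with
`b₀ = σ₀^{1/2}(σ₀^{1/2} ρ₀ σ₀^{1/2})^{-1/2} σ₀^{1/2}` for some state `σ₀`. -/
theorem simple_generalizedChannel_characterization
    (S : Matrix n n ℂ →ₗ[ℂ] Matrix m m ℂ) (T : Matrix m m ℂ →ₗ[ℂ] Matrix n n ℂ)
    (hSCP : (choi S).PosSemidef) (hStp : ∀ a, Matrix.trace (S a) = Matrix.trace a)
    (hadj : ∀ (a : Matrix n n ℂ) (b : Matrix m m ℂ),
      Matrix.trace ((T b)ᴴ * a) = Matrix.trace (bᴴ * S a))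
    (hTinj : Function.Injective T)
    (hTmul : ∀ x y : Matrix m m ℂ, T (x * y) = T x * T y)
    (hTstar : ∀ x : Matrix m m ℂ, T xᴴ = (T x)ᴴ)
    (hTone : T 1 = 1)
    (ρ : Matrix n n ℂ) (hρ : ρ.PosDef) (hρtr : Matrix.trace ρ = 1)
    (ρ₀ : Matrix m m ℂ) (hρ₀ : ρ₀ = S ρ)
    (d : Matrix n n ℂ) :
    (d.PosSemidef ∧
        ∀ a : Matrix n n ℂ, (∃ t : ℂ, S a = t • ρ₀) → Matrix.trace (aᴴ * (d - 1)) = 0) ↔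
      ∃ σ₀ : Matrix m m ℂ, σ₀.PosSemidef ∧ Matrix.trace σ₀ = 1 ∧
        d = T (bform ρ₀ σ₀ * bform ρ₀ σ₀) := by
  classical
  have hTinj0 : ∀ x : Matrix m m ℂ, T x = 0 → x = 0 := fun x hx => hTinj (by rw [hx, map_zero])
  have hTpsd : ∀ x : Matrix m m ℂ, x.PosSemidef → (T x).PosSemidef := by
    intro x hx
    obtain ⟨B, hB⟩ : ∃ B : Matrix m m ℂ, x = Bᴴ * B :=
      ⟨hx.sqrt, by rw [hx.posSemidef_sqrt.isHermitian.eq, hx.sqrt_mul_self]⟩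
    rw [hB, hTmul, hTstar]
    exact Matrix.posSemidef_conjTranspose_mul_self (T B)
  have htrρ₀ : Matrix.trace ρ₀ = 1 := by rw [hρ₀, hStp, hρtr]
  have hρ₀ne : ρ₀ ≠ 0 := by
    intro h
    rw [h, Matrix.trace_zero] at htrρ₀
    exact one_ne_zero htrρ₀.symm
  have hSstar : ∀ a : Matrix n n ℂ, S aᴴ = (S a)ᴴ := by
    intro a
    have hb : ∀ b : Matrix m m ℂ,
        Matrix.trace (bᴴ * S aᴴ) = Matrix.trace (bᴴ * (S a)ᴴ) := by
      intro b
      have e1 : Matrix.trace (bᴴ * S aᴴ) = star (Matrix.trace (b * S a)) := by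
        rw [← hadj aᴴ b]
        have h2 : (T b)ᴴ * aᴴ = (a * T b)ᴴ := (Matrix.conjTranspose_mul a (T b)).symm
        rw [h2, Matrix.trace_conjTranspose]
        congr 1
        calc Matrix.trace (a * T b) = Matrix.trace (T b * a) := Matrix.trace_mul_comm a (T b)
          _ = Matrix.trace ((T bᴴ)ᴴ * a) := by rw [hTstar, Matrix.conjTranspose_conjTranspose]
          _ = Matrix.trace ((bᴴ)ᴴ * S a) := hadj a bᴴ
          _ = Matrix.trace (b * S a) := by rw [Matrix.conjTranspose_conjTranspose]
      have e2 : Matrix.trace (bᴴ * (S a)ᴴ) = star (Matrix.trace (b * S a)) := by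
        have h2 : bᴴ * (S a)ᴴ = (S a * b)ᴴ := (Matrix.conjTranspose_mul (S a) b).symm
        rw [h2, Matrix.trace_conjTranspose, Matrix.trace_mul_comm]
      rw [e1, e2]
    have h3 := hb (S aᴴ - (S a)ᴴ)
    have hzero : Matrix.trace ((S aᴴ - (S a)ᴴ)ᴴ * (S aᴴ - (S a)ᴴ)) = 0 := by
      rw [Matrix.mul_sub, Matrix.trace_sub, h3, sub_self]
    exact sub_eq_zero.mp (chp_trace_self_zero hzero)
  have hρ₀H : ρ₀ᴴ = ρ₀ := by rw [hρ₀, ← hSstar ρ, hρ.1]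
  have hρ₀PD : ρ₀.PosDef := by
    refine Matrix.PosDef.of_dotProduct_mulVec_pos hρ₀H fun v hv => ?_
    set A : Matrix m (Fin 1) ℂ := Matrix.replicateCol (Fin 1) v with hA
    set kmat : Matrix m m ℂ := A * Aᴴ with hk
    have hkPSD : kmat.PosSemidef := Matrix.posSemidef_self_mul_conjTranspose A
    have hkH : kmatᴴ = kmat := hkPSD.isHermitian
    have hkapp : ∀ i j, kmat i j = v i * star (v j) := by
      intro i j
      simp [hk, hA, Matrix.mul_apply, Matrix.conjTranspose_apply]
    have hkne : kmat ≠ 0 := by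
      obtain ⟨i, hi⟩ := Function.ne_iff.mp hv
      intro h
      apply hi
      have h2 := congrFun (congrFun h i) i
      rw [hkapp i i] at h2
      simpa [mul_eq_zero] using h2
    have hTkne : T kmat ≠ 0 := fun h => hkne (hTinj0 _ h)
    have hTkPSD := hTpsd kmat hkPSD
    have hTkH : (T kmat)ᴴ = T kmat := by rw [← hTstar, hkH]
    have e1 : dotProduct (star v) (ρ₀ *ᵥ v) = Matrix.trace (ρ₀ * kmat) := by
      simp only [Matrix.trace, Matrix.diag_apply, Matrix.mul_apply, hkapp,
        dotProduct, Matrix.mulVec, Finset.mul_sum, Pi.star_apply]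
      refine Finset.sum_congr rfl fun i _ => Finset.sum_congr rfl fun j _ => ?_
      ring
    have e2 : Matrix.trace (ρ₀ * kmat) = Matrix.trace (T kmat * ρ) := by
      calc Matrix.trace (ρ₀ * kmat) = Matrix.trace (kmat * ρ₀) := Matrix.trace_mul_comm ρ₀ kmat
        _ = Matrix.trace (kmatᴴ * S ρ) := by rw [hkH, hρ₀]
        _ = Matrix.trace ((T kmat)ᴴ * ρ) := (hadj ρ kmat).symm
        _ = Matrix.trace (T kmat * ρ) := by rw [hTkH]
    rw [e1, e2]
    exact chp_pairing hρ hTkPSD hTkne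
  constructor
  · rintro ⟨hdPSD, hperp⟩
    set fρ : Matrix m m ℂ →ₗ[ℂ] ℂ :=
      { toFun := fun c => Matrix.trace (ρ₀ᴴ * c)
        map_add' := fun x y => by simp [Matrix.mul_add]
        map_smul' := fun t x => by simp [Matrix.mul_smul] } with hfρ
    have htrρρ : Matrix.trace (ρ₀ᴴ * ρ₀) ≠ 0 := (chp_trace_self_pos ρ₀ hρ₀ne).ne'
    have hx : ∀ a : Matrix n n ℂ,
        (∀ c ∈ LinearMap.ker fρ, Matrix.trace ((T c)ᴴ * a) = 0) →
        Matrix.trace (aᴴ * (d - 1)) = 0 := by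
      intro a ha
      set t : ℂ := Matrix.trace (ρ₀ᴴ * S a) / Matrix.trace (ρ₀ᴴ * ρ₀) with ht
      set c0 : Matrix m m ℂ := S a - t • ρ₀ with hc0
      have hker : Matrix.trace (ρ₀ᴴ * c0) = 0 := by
        rw [hc0, Matrix.mul_sub, Matrix.trace_sub, Matrix.mul_smul, Matrix.trace_smul,
          smul_eq_mul, ht, div_mul_cancel₀ _ htrρρ, sub_self]
      have hc0W : c0 ∈ LinearMap.ker fρ := by
        rw [LinearMap.mem_ker]
        exact hker
      have h1 : Matrix.trace (c0ᴴ * S a) = 0 := by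
        rw [← hadj a c0]
        exact ha c0 hc0W
      have h2 : Matrix.trace (c0ᴴ * ρ₀) = 0 := by
        rw [chp_trace_conj_swap, hker, map_zero]
      have h3 : Matrix.trace (c0ᴴ * c0) = 0 := by
        nth_rewrite 2 [hc0]
        rw [Matrix.mul_sub, Matrix.trace_sub, Matrix.mul_smul, Matrix.trace_smul, smul_eq_mul,
          h1, h2, mul_zero, sub_self]
      have hc00 : c0 = 0 := chp_trace_self_zero h3
      have hSa : S a = t • ρ₀ := by
        have h4 : S a - t • ρ₀ = 0 := by rw [← hc0]; exact hc00
        exact sub_eq_zero.mp h4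
      exact hperp a ⟨t, hSa⟩
    obtain ⟨c, hcW, hTc⟩ := chp_perp_extract T (LinearMap.ker fρ) (d - 1) hx
    have hkerc : Matrix.trace (ρ₀ᴴ * c) = 0 := LinearMap.mem_ker.mp hcW
    set e : Matrix m m ℂ := c + 1 with he
    have hTe : T e = d := by rw [he, map_add, hTc, hTone, sub_add_cancel]
    have heH : e.IsHermitian := by
      have h1 : T eᴴ = T e := by
        rw [he, Matrix.conjTranspose_add, Matrix.conjTranspose_one, map_add, map_add, hTone,
          hTstar, hTc, Matrix.conjTranspose_sub, Matrix.conjTranspose_one, hdPSD.1]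
      exact hTinj h1
    have hePSD : e.PosSemidef := by
      refine chp_herm_psd_of_T T hTmul hTstar hTinj heH ?_
      rw [hTe]
      exact hdPSD
    have htre : Matrix.trace (ρ₀ᴴ * e) = 1 := by
      rw [he, Matrix.mul_add, Matrix.trace_add, hkerc, Matrix.mul_one,
        Matrix.trace_conjTranspose, htrρ₀, zero_add, star_one]
    have htre' : Matrix.trace (ρ₀ * e) = 1 := by
      rw [← hρ₀H]
      exact htre
    set f : Matrix m m ℂ := hePSD.sqrt with hfdef
    have hff : f * f = e := hePSD.sqrt_mul_self
    have hfPSD : f.PosSemidef := hePSD.posSemidef_sqrt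
    have hfH : fᴴ = f := hfPSD.isHermitian
    set σ₀ : Matrix m m ℂ := f * ρ₀ * f with hσdef
    have hσPSD : σ₀.PosSemidef := by
      have := hρ₀PD.posSemidef.mul_mul_conjTranspose_same f
      rwa [hfH] at this
    have hσtr : Matrix.trace σ₀ = 1 := by
      rw [hσdef]
      calc Matrix.trace (f * ρ₀ * f) = Matrix.trace (f * (f * ρ₀)) :=
            Matrix.trace_mul_comm (f * ρ₀) f
        _ = Matrix.trace (e * ρ₀) := by rw [← Matrix.mul_assoc, hff]
        _ = Matrix.trace (ρ₀ * e) := Matrix.trace_mul_comm e ρ₀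
        _ = 1 := htre'
    obtain ⟨hbPSD, hbρb⟩ := chp_key hρ₀PD hσPSD
    have hbf : bform ρ₀ σ₀ = f := by
      refine chp_uniq hρ₀PD hbPSD hfPSD ?_
      rw [hbρb, hσdef]
    exact ⟨σ₀, hσPSD, hσtr, by rw [hbf, hff, hTe]⟩
  · rintro ⟨σ₀, hσPSD, hσtr, rfl⟩
    obtain ⟨hbPSD, hbρb⟩ := chp_key hρ₀PD hσPSD
    set b : Matrix m m ℂ := bform ρ₀ σ₀ with hbdef
    have hbH : bᴴ = b := hbPSD.isHermitian
    constructor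
    · have h1 : T (b * b) = (T b)ᴴ * T b := by rw [hTmul, ← hTstar, hbH]
      rw [h1]
      exact Matrix.posSemidef_conjTranspose_mul_self (T b)
    · rintro a ⟨t, hta⟩
      have hw : T (b * b) - 1 = T (b * b - 1) := by rw [map_sub, hTone]
      have hwH : (b * b - 1)ᴴ = b * b - 1 := by
        rw [Matrix.conjTranspose_sub, Matrix.conjTranspose_mul, hbH, Matrix.conjTranspose_one]
      have htr1 : Matrix.trace ((b * b - 1) * ρ₀) = 0 := by
        rw [Matrix.sub_mul, Matrix.trace_sub, Matrix.one_mul]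
        have h2 : Matrix.trace (b * b * ρ₀) = 1 := by
          calc Matrix.trace (b * b * ρ₀) = Matrix.trace (b * (b * ρ₀)) := by
                rw [Matrix.mul_assoc]
            _ = Matrix.trace ((b * ρ₀) * b) := Matrix.trace_mul_comm b (b * ρ₀)
            _ = Matrix.trace σ₀ := by rw [hbρb]
            _ = 1 := hσtr
        rw [h2, htrρ₀, sub_self]
      calc Matrix.trace (aᴴ * (T (b * b) - 1))
          = Matrix.trace (aᴴ * T (b * b - 1)) := by rw [hw]
        _ = (starRingEnd ℂ) (Matrix.trace ((T (b * b - 1))ᴴ * a)) := chp_trace_conj_swap _ _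
        _ = (starRingEnd ℂ) (Matrix.trace ((b * b - 1)ᴴ * S a)) := by rw [hadj]
        _ = (starRingEnd ℂ) (Matrix.trace ((b * b - 1) * (t • ρ₀))) := by rw [hwH, hta]
        _ = 0 := by
            rw [Matrix.mul_smul, Matrix.trace_smul, htr1, smul_zero, map_zero]
end

section
/- Let Φ : A → B be a generalized channel with respect to J with minimal Kraus representation Φ(a) = Σ_{i,j} Σ_{k ∈ I(i,j)} V_k a V_k*, where the Kraus operators V_k : H_j → K_i are linearly independent within each block. Let {x₁,…,x_M} be a basis of J^⊥. Then Φ is an extreme point of C_J(A,B) if and only if the set ∪_{i,j}{V_k* V_l : k,l ∈ I(i,j)} ∪ {x₁,…,x_M} is linearly independent. -/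
open Matrix ComplexOrder

variable {n m : Type*} [Fintype n] [DecidableEq n] [Fintype m] [DecidableEq m]

set_option linter.unusedSectionVars false
set_option maxHeartbeats 1000000

namespace ExtAux

/-- vectorization matrix whose columns are the Kraus operators -/
noncomputable def What {N : ℕ} (V : Fin N → Matrix m n ℂ) : Matrix (m × n) (Fin N) ℂ :=
  Matrix.of fun p k => V k p.1 p.2

/-- the Kraus-type map with coefficient matrix c -/
noncomputable def Kmap {N : ℕ} (V : Fin N → Matrix m n ℂ) (c : Matrix (Fin N) (Fin N) ℂ) :
    Matrix n n ℂ →ₗ[ℂ] Matrix m m ℂ where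
  toFun a := ∑ k, ∑ l, c k l • (V k * a * (V l)ᴴ)
  map_add' a b := by
    simp [Matrix.mul_add, Matrix.add_mul, smul_add, Finset.sum_add_distrib]
  map_smul' r a := by
    simp only [RingHom.id_apply, Finset.smul_sum]
    refine Finset.sum_congr rfl fun k _ => Finset.sum_congr rfl fun l _ => ?_
    rw [Matrix.mul_smul, Matrix.smul_mul, smul_comm]

/-- the coefficient-to-operator sum `c ↦ ∑ c k l • Vkᴴ Vl` -/
noncomputable def Ysum {N : ℕ} (V : Fin N → Matrix m n ℂ) :
    Matrix (Fin N) (Fin N) ℂ →ₗ[ℂ] Matrix n n ℂ where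
  toFun c := ∑ k, ∑ l, c k l • ((V k)ᴴ * V l)
  map_add' c c' := by
    simp [Matrix.add_apply, add_smul, Finset.sum_add_distrib]
  map_smul' r c := by
    simp [Matrix.smul_apply, smul_smul, Finset.smul_sum, smul_assoc]

lemma mul_std_mul (A B : Matrix m n ℂ) (a b : n) (i j : m) :
    (A * Matrix.single a b (1:ℂ) * Bᴴ) i j = A i a * star (B j b) := by
  rw [Matrix.mul_apply]
  have : ∀ t, (A * Matrix.single a b (1:ℂ)) i t * Bᴴ t j
      = (if t = b then A i a * star (B j t) else 0) := by
    intro t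
    rw [Matrix.mul_apply]
    simp [Matrix.single, Matrix.conjTranspose_apply, Finset.sum_ite_eq,
      ite_and, Finset.mul_sum]
    split <;> simp_all [eq_comm]
  calc ∑ t, (A * Matrix.single a b (1:ℂ)) i t * Bᴴ t j
      = ∑ t, if t = b then A i a * star (B j t) else 0 :=
        Finset.sum_congr rfl fun t _ => this t
    _ = A i a * star (B j b) := by simp

lemma choi_Kmap {N : ℕ} (V : Fin N → Matrix m n ℂ) (c : Matrix (Fin N) (Fin N) ℂ) :
    choi (Kmap V c) = What V * c * (What V)ᴴ := by
  ext ⟨i, a⟩ ⟨j, b⟩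
  simp only [choi, Kmap, Matrix.of_apply, LinearMap.coe_mk, AddHom.coe_mk,
    Matrix.sum_apply, Matrix.smul_apply, smul_eq_mul, mul_std_mul]
  rw [Matrix.mul_apply]
  simp only [Matrix.mul_apply, What, Matrix.of_apply, Matrix.conjTranspose_apply,
    Finset.sum_mul]
  rw [Finset.sum_comm]
  refine Finset.sum_congr rfl fun l _ => Finset.sum_congr rfl fun k _ => ?_
  ring

lemma choi_inj {Ψ Ψ' : Matrix n n ℂ →ₗ[ℂ] Matrix m m ℂ} (h : choi Ψ = choi Ψ') : Ψ = Ψ' := by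
  have hstd : ∀ i j, Ψ (Matrix.single i j 1) = Ψ' (Matrix.single i j 1) := by
    intro i j
    ext p q
    have := congrFun (congrFun h (p, i)) (q, j)
    simpa [choi] using this
  ext a : 1
  rw [Matrix.matrix_eq_sum_single a, map_sum, map_sum]
  refine Finset.sum_congr rfl fun i _ => ?_
  rw [map_sum, map_sum]
  refine Finset.sum_congr rfl fun j _ => ?_
  rw [show Matrix.single i j (a i j) = a i j • Matrix.single i j (1:ℂ) by
    rw [Matrix.smul_single, smul_eq_mul, mul_one]]
  rw [_root_.map_smul, _root_.map_smul, hstd i j]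

lemma choi_zero : choi (0 : Matrix n n ℂ →ₗ[ℂ] Matrix m m ℂ) = 0 := by
  ext p q
  simp [choi]

lemma choi_sub (Ψ Ψ' : Matrix n n ℂ →ₗ[ℂ] Matrix m m ℂ) :
    choi (Ψ - Ψ') = choi Ψ - choi Ψ' := by
  ext p q
  simp [choi, LinearMap.sub_apply, Matrix.sub_apply]

lemma choi_add (Ψ Ψ' : Matrix n n ℂ →ₗ[ℂ] Matrix m m ℂ) :
    choi (Ψ + Ψ') = choi Ψ + choi Ψ' := by
  ext p q
  simp [choi, LinearMap.add_apply, Matrix.add_apply]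

lemma choi_real_comb (a b : ℝ) (Ψ Ψ' : Matrix n n ℂ →ₗ[ℂ] Matrix m m ℂ) :
    choi (a • Ψ + b • Ψ') = a • choi Ψ + b • choi Ψ' := by
  ext p q
  simp [choi, LinearMap.add_apply, LinearMap.smul_apply, Matrix.add_apply, Matrix.smul_apply]

lemma Kmap_one_apply {N : ℕ} (V : Fin N → Matrix m n ℂ) (a : Matrix n n ℂ) :
    Kmap V 1 a = ∑ k, V k * a * (V k)ᴴ := by
  simp only [Kmap, LinearMap.coe_mk, AddHom.coe_mk]
  refine Finset.sum_congr rfl fun k _ => ?_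
  rw [Finset.sum_eq_single k]
  · simp [Matrix.one_apply_eq]
  · intro l _ hlk
    rw [Matrix.one_apply_ne (Ne.symm hlk), zero_smul]
  · intro h
    exact absurd (Finset.mem_univ k) h

lemma trace_Kmap {N : ℕ} (V : Fin N → Matrix m n ℂ) (c : Matrix (Fin N) (Fin N) ℂ)
    (a : Matrix n n ℂ) :
    Matrix.trace (Kmap V c a) = Matrix.trace (Ysum V cᵀ * a) := by
  simp only [Kmap, LinearMap.coe_mk, AddHom.coe_mk, Ysum]
  have lhs : Matrix.trace (∑ k, ∑ l, c k l • (V k * a * (V l)ᴴ))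
      = ∑ k, ∑ l, c k l * Matrix.trace ((V l)ᴴ * V k * a) := by
    rw [Matrix.trace_sum]
    refine Finset.sum_congr rfl fun k _ => ?_
    rw [Matrix.trace_sum]
    refine Finset.sum_congr rfl fun l _ => ?_
    rw [Matrix.trace_smul, smul_eq_mul, Matrix.trace_mul_cycle]
  have rhs : Matrix.trace ((∑ k, ∑ l, cᵀ k l • ((V k)ᴴ * V l)) * a)
      = ∑ k, ∑ l, c l k * Matrix.trace ((V k)ᴴ * V l * a) := by
    rw [Finset.sum_mul, Matrix.trace_sum]
    refine Finset.sum_congr rfl fun k _ => ?_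
    rw [Finset.sum_mul, Matrix.trace_sum]
    refine Finset.sum_congr rfl fun l _ => ?_
    rw [Matrix.smul_mul, Matrix.trace_smul, Matrix.transpose_apply, smul_eq_mul]
  rw [lhs, rhs, Finset.sum_comm]

section JLemmas
variable {J : Submodule ℂ (Matrix n n ℂ)}

lemma star_mem_of_posGen (hJ : PositivelyGenerated J) {a : Matrix n n ℂ} (ha : a ∈ J) :
    aᴴ ∈ J := by
  rw [hJ] at ha ⊢
  induction ha using Submodule.span_induction with
  | mem y hy =>
    rw [hy.2.isHermitian.eq]
    exact Submodule.subset_span hy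
  | zero => simpa using Submodule.zero_mem _
  | add y z _ _ hy hz => rw [Matrix.conjTranspose_add]; exact Submodule.add_mem _ hy hz
  | smul c y _ hy => rw [Matrix.conjTranspose_smul]; exact Submodule.smul_mem _ _ hy

lemma mem_hsPerp_iff_trace_mul (hJ : PositivelyGenerated J) {Y : Matrix n n ℂ} :
    Y ∈ hsPerp J ↔ ∀ a ∈ J, Matrix.trace (Y * a) = 0 := by
  constructor
  · intro h a ha
    rw [Matrix.trace_mul_comm]
    have := h aᴴ (star_mem_of_posGen hJ ha)
    rwa [Matrix.conjTranspose_conjTranspose] at this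
  · intro h a ha
    rw [← Matrix.trace_mul_comm]
    exact h aᴴ (star_mem_of_posGen hJ ha)

lemma hsPerp_star_mem (hJ : PositivelyGenerated J) {Y : Matrix n n ℂ} (hY : Y ∈ hsPerp J) :
    Yᴴ ∈ hsPerp J := by
  intro a ha
  have h1 : Matrix.trace (Y * a) = 0 := (mem_hsPerp_iff_trace_mul hJ).mp hY a ha
  calc Matrix.trace (aᴴ * Yᴴ) = Matrix.trace ((Y * a)ᴴ) := by rw [Matrix.conjTranspose_mul]
    _ = star (Matrix.trace (Y * a)) := Matrix.trace_conjTranspose _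
    _ = 0 := by rw [h1, star_zero]

end JLemmas

/-- existence of small ε with `1 ± ε d` PSD, for Hermitian `d`. -/
lemma exists_eps {N : ℕ} {d : Matrix (Fin N) (Fin N) ℂ} (hd : d.IsHermitian) :
    ∃ ε : ℝ, 0 < ε ∧ ((1 : Matrix (Fin N) (Fin N) ℂ) + (ε : ℂ) • d).PosSemidef ∧
      ((1 : Matrix (Fin N) (Fin N) ℂ) - (ε : ℂ) • d).PosSemidef := by
  set lam := hd.eigenvalues with hlam
  set S : ℝ := (∑ i, |lam i|) + 1 with hS
  have hS0 : 0 < S := by positivity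
  set ε : ℝ := S⁻¹ with hε
  have hε0 : 0 < ε := by positivity
  have hbound : ∀ i, ε * |lam i| ≤ 1 := by
    intro i
    have h1 : |lam i| ≤ S := by
      have : |lam i| ≤ ∑ i, |lam i| :=
        Finset.single_le_sum (f := fun i => |lam i|) (fun i _ => abs_nonneg _) (Finset.mem_univ i)
      linarith
    calc ε * |lam i| ≤ ε * S := by nlinarith
      _ = 1 := inv_mul_cancel₀ hS0.ne'
  have key : ∀ t : ℝ, (∀ i, 0 ≤ 1 + t * lam i) →
      ((1 : Matrix (Fin N) (Fin N) ℂ) + (t : ℂ) • d).PosSemidef := by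
    intro t ht
    have hU : (hd.eigenvectorUnitary : Matrix (Fin N) (Fin N) ℂ) *
        star (hd.eigenvectorUnitary : Matrix (Fin N) (Fin N) ℂ) = 1 :=
      (Matrix.mem_unitaryGroup_iff).mp hd.eigenvectorUnitary.2
    have hdiag : Matrix.diagonal (fun i => ((1 + t * lam i : ℝ) : ℂ))
        = 1 + (t : ℂ) • Matrix.diagonal (RCLike.ofReal ∘ lam) := by
      ext i j
      rcases eq_or_ne i j with rfl | hij
      · simp [Matrix.diagonal_apply_eq, Matrix.one_apply_eq]
      · simp [Matrix.diagonal_apply_ne _ hij, Matrix.one_apply_ne hij]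
    have hrepr : (1 : Matrix (Fin N) (Fin N) ℂ) + (t : ℂ) • d
        = (hd.eigenvectorUnitary : Matrix (Fin N) (Fin N) ℂ) *
          Matrix.diagonal (fun i => ((1 + t * lam i : ℝ) : ℂ)) *
          star (hd.eigenvectorUnitary : Matrix (Fin N) (Fin N) ℂ) := by
      rw [hdiag, Matrix.mul_add, Matrix.add_mul, mul_one, hU]
      congr 1
      rw [Matrix.mul_smul, Matrix.smul_mul]
      congr 1
      rw [hlam]
      exact hd.spectral_theorem
    rw [hrepr, Matrix.star_eq_conjTranspose]
    refine Matrix.PosSemidef.mul_mul_conjTranspose_same ?_ _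
    refine Matrix.posSemidef_diagonal_iff.mpr fun i => ?_
    exact_mod_cast Complex.zero_le_real.mpr (ht i)
  refine ⟨ε, hε0, key ε fun i => ?_, ?_⟩
  · have := hbound i
    have h2 : -(ε * |lam i|) ≤ ε * lam i := by nlinarith [neg_abs_le (lam i), abs_nonneg (lam i)]
    linarith
  · have h := key (-ε) fun i => by
      have := hbound i
      have h2 : (-ε) * lam i ≥ -(ε * |lam i|) := by nlinarith [le_abs_self (lam i)]
      linarith
    rwa [show ((-ε : ℝ) : ℂ) = -(ε : ℂ) by push_cast; ring, neg_smul, ← sub_eq_add_neg] at h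

section GW
variable {N : ℕ} {V : Fin N → Matrix m n ℂ}

lemma What_mulVec_eq_zero (hV : LinearIndependent ℂ V) {v : Fin N → ℂ}
    (h : What V *ᵥ v = 0) : v = 0 := by
  have hsum : ∑ k, v k • V k = 0 := by
    ext i j
    have h2 := congrFun h (i, j)
    simp only [Matrix.mulVec, dotProduct, What, Matrix.of_apply, Pi.zero_apply] at h2
    simp only [Matrix.sum_apply, Matrix.smul_apply, smul_eq_mul, Matrix.zero_apply]
    rw [← h2]
    exact Finset.sum_congr rfl fun k _ => mul_comm _ _
  have := Fintype.linearIndependent_iff.mp hV v hsum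
  funext k
  exact this k

lemma G_posDef (hV : LinearIndependent ℂ V) : ((What V)ᴴ * What V).PosDef := by
  refine Matrix.PosDef.of_dotProduct_mulVec_pos (Matrix.isHermitian_conjTranspose_mul_self _) fun v hv => ?_
  have hW : What V *ᵥ v ≠ 0 := fun h => hv (What_mulVec_eq_zero hV h)
  have hq : star v ⬝ᵥ ((What V)ᴴ * What V) *ᵥ v
      = star (What V *ᵥ v) ⬝ᵥ (What V *ᵥ v) := by
    rw [← Matrix.mulVec_mulVec, Matrix.dotProduct_mulVec, Matrix.vecMul_conjTranspose, star_star]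
  rw [hq]
  have h0 : star (What V *ᵥ v) ⬝ᵥ (What V *ᵥ v) ≠ 0 :=
    fun h => hW (dotProduct_star_self_eq_zero.mp h)
  have hnn : 0 ≤ star (What V *ᵥ v) ⬝ᵥ (What V *ᵥ v) :=
    Finset.sum_nonneg fun i _ => star_mul_self_nonneg _
  exact lt_of_le_of_ne hnn (Ne.symm h0)

lemma G_isUnit (hV : LinearIndependent ℂ V) : IsUnit ((What V)ᴴ * What V).det :=
  Matrix.isUnit_iff_isUnit_det _ |>.mp (G_posDef hV).isUnit

lemma factor_unique (hV : LinearIndependent ℂ V) {c : Matrix (Fin N) (Fin N) ℂ}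
    (h : What V * c * (What V)ᴴ = 0) : c = 0 := by
  set W := What V
  set G := Wᴴ * W with hG
  have h2 : G * c * G = 0 := by
    have : Wᴴ * (W * c * Wᴴ) * W = G * c * G := by
      simp only [hG, Matrix.mul_assoc]
    rw [← this, h]
    simp
  calc c = (G⁻¹ * G) * c * (G * G⁻¹) := by
        rw [Matrix.nonsing_inv_mul _ (G_isUnit hV), Matrix.mul_nonsing_inv _ (G_isUnit hV),
          one_mul, mul_one]
    _ = G⁻¹ * (G * c * G) * G⁻¹ := by simp only [Matrix.mul_assoc]
    _ = 0 := by rw [h2]; simp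

lemma herm_factor (hV : LinearIndependent ℂ V) {H : Matrix (m × n) (m × n) ℂ}
    (hH : H.IsHermitian) (hker : ∀ v, (What V)ᴴ *ᵥ v = 0 → H *ᵥ v = 0) :
    ∃ c : Matrix (Fin N) (Fin N) ℂ, H = What V * c * (What V)ᴴ := by
  set W := What V
  set G := Wᴴ * W with hG
  set Q := W * G⁻¹ * Wᴴ with hQ
  have hGinv : G * G⁻¹ = 1 := Matrix.mul_nonsing_inv _ (G_isUnit hV)
  have h1 : Wᴴ * (1 - Q) = 0 := by
    rw [Matrix.mul_sub, Matrix.mul_one, hQ]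
    have : Wᴴ * (W * G⁻¹ * Wᴴ) = (G * G⁻¹) * Wᴴ := by
      simp only [hG, Matrix.mul_assoc]
    rw [this, hGinv, Matrix.one_mul, sub_self]
  have h2 : H * (1 - Q) = 0 := by
    ext i j
    have hcol : Wᴴ *ᵥ (fun r => (1 - Q) r j) = 0 := by
      funext r
      have h3 := congrFun (congrFun h1 r) j
      rw [Matrix.mul_apply] at h3
      simp only [Matrix.zero_apply] at h3
      simpa [Matrix.mulVec, dotProduct] using h3
    have h4 := congrFun (hker _ hcol) i
    simp only [Matrix.mulVec, dotProduct, Pi.zero_apply] at h4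
    rw [Matrix.mul_apply, Matrix.zero_apply]
    simpa using h4
  have hHQ : H = H * Q := by
    have h5 : H * 1 - H * Q = 0 := by rw [← Matrix.mul_sub, h2]
    rw [Matrix.mul_one] at h5
    exact sub_eq_zero.mp h5
  have hQherm : Qᴴ = Q := by
    have hGH : G⁻¹.IsHermitian := (Matrix.isHermitian_conjTranspose_mul_self W).inv
    rw [hQ]
    calc (W * G⁻¹ * Wᴴ)ᴴ = W * G⁻¹ᴴ * Wᴴ := by
          rw [Matrix.conjTranspose_mul, Matrix.conjTranspose_mul,
            Matrix.conjTranspose_conjTranspose]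
          simp only [Matrix.mul_assoc]
      _ = W * G⁻¹ * Wᴴ := by rw [hGH.eq]
  have hQH : H = Q * H := by
    have := congrArg Matrix.conjTranspose hHQ
    rwa [Matrix.conjTranspose_mul, hQherm, hH.eq] at this
  refine ⟨G⁻¹ * Wᴴ * H * W * G⁻¹, ?_⟩
  calc H = Q * (H * Q) := by rw [← hHQ, ← hQH]
    _ = W * (G⁻¹ * Wᴴ * H * W * G⁻¹) * Wᴴ := by
        rw [hQ]
        simp only [Matrix.mul_assoc]

end GW
end ExtAux

/-- given a minimal Kraus representation `Φ(a) = Σ_k V_k a V_k*` of a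
generalized channel `Φ` w.r.t. `J`, and a basis `x₁,…,x_M` of `J^⊥`, `Φ` is an extreme
point of `C_J(A,B)` iff `{V_k* V_l} ∪ {x₁,…,x_M}` is linearly independent. -/
theorem extreme_iff_kraus_linearIndependent
    (J : Submodule ℂ (Matrix n n ℂ)) (hJ : PositivelyGenerated J)
    {N M : ℕ} (V : Fin N → Matrix m n ℂ) (hV : LinearIndependent ℂ V)
    (x : Fin M → Matrix n n ℂ)
    (hxind : LinearIndependent ℂ x)
    (hxspan : Submodule.span ℂ (Set.range x) = hsPerp J)
    (Φ : Matrix n n ℂ →ₗ[ℂ] Matrix m m ℂ)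
    (hΦ : ∀ a : Matrix n n ℂ, Φ a = ∑ k, V k * a * (V k)ᴴ)
    (hΦtp : ∀ a ∈ J, Matrix.trace (Φ a) = Matrix.trace a) :
    Φ ∈ Set.extremePoints ℝ
        {Ψ : Matrix n n ℂ →ₗ[ℂ] Matrix m m ℂ |
          (choi Ψ).PosSemidef ∧ ∀ a ∈ J, Matrix.trace (Ψ a) = Matrix.trace a} ↔
      LinearIndependent ℂ
        (Sum.elim (fun kl : Fin N × Fin N => (V kl.1)ᴴ * V kl.2) x) := by
  classical
  have hΦK : Φ = ExtAux.Kmap V 1 := by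
    apply LinearMap.ext
    intro a
    rw [hΦ a, ExtAux.Kmap_one_apply]
  have hchoiΦ : choi Φ = ExtAux.What V * (ExtAux.What V)ᴴ := by
    rw [hΦK, ExtAux.choi_Kmap, Matrix.mul_one]
  have hchoiΦpsd : (choi Φ).PosSemidef := by
    rw [hchoiΦ]
    exact Matrix.posSemidef_self_mul_conjTranspose _
  constructor
  · -- extreme ⇒ independent
    intro hext
    by_contra hdep
    obtain ⟨g, hgsum, i0, hgi0⟩ := Fintype.not_linearIndependent_iff.mp hdep
    rw [Fintype.sum_sum_type] at hgsum
    simp only [Sum.elim_inl, Sum.elim_inr] at hgsum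
    set e : Matrix (Fin N) (Fin N) ℂ := Matrix.of (fun k l => g (Sum.inl (k, l))) with he
    have hYe : ExtAux.Ysum V e = - ∑ m_, g (Sum.inr m_) • x m_ := by
      rw [eq_neg_iff_add_eq_zero, ← hgsum]
      congr 1
      rw [Fintype.sum_prod_type]
      rfl
    have hene : e ≠ 0 := by
      intro h0
      have hx0 : ∑ m_, g (Sum.inr m_) • x m_ = 0 := by
        have h1 := hYe
        rw [h0, map_zero] at h1
        rw [← neg_eq_zero, ← h1]
      have hz := Fintype.linearIndependent_iff.mp hxind (fun m_ => g (Sum.inr m_)) hx0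
      rcases i0 with p | m_
      · refine hgi0 ?_
        have := congrFun (congrFun h0 p.1) p.2
        simpa [he] using this
      · exact hgi0 (hz m_)
    have hmemx : ∀ m_, x m_ ∈ hsPerp J := by
      intro m_
      rw [← hxspan]
      exact Submodule.subset_span ⟨m_, rfl⟩
    have hYemem : ExtAux.Ysum V e ∈ hsPerp J := by
      rw [hYe]
      exact Submodule.neg_mem _ (Submodule.sum_mem _ fun m_ _ =>
        Submodule.smul_mem _ _ (hmemx m_))
    have hYestar : ExtAux.Ysum V eᴴ ∈ hsPerp J := by
      have h1 : (ExtAux.Ysum V e)ᴴ = ExtAux.Ysum V eᴴ := by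
        show (∑ k, ∑ l, e k l • ((V k)ᴴ * V l))ᴴ = ∑ k, ∑ l, eᴴ k l • ((V k)ᴴ * V l)
        rw [Matrix.conjTranspose_sum]
        simp only [Matrix.conjTranspose_sum, Matrix.conjTranspose_smul,
          Matrix.conjTranspose_mul, Matrix.conjTranspose_conjTranspose]
        rw [Finset.sum_comm]
        refine Finset.sum_congr rfl fun k _ => Finset.sum_congr rfl fun l _ => ?_
        rw [Matrix.conjTranspose_apply]
      rw [← h1]
      exact ExtAux.hsPerp_star_mem hJ hYemem
    obtain ⟨d, hdherm, hdne, hdmem⟩ :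
        ∃ d : Matrix (Fin N) (Fin N) ℂ, d.IsHermitian ∧ d ≠ 0 ∧
          ExtAux.Ysum V d ∈ hsPerp J := by
      by_cases h1 : e + eᴴ = 0
      · refine ⟨Complex.I • (e - eᴴ), ?_, ?_, ?_⟩
        · show (Complex.I • (e - eᴴ))ᴴ = Complex.I • (e - eᴴ)
          rw [Matrix.conjTranspose_smul, Matrix.conjTranspose_sub,
            Matrix.conjTranspose_conjTranspose]
          rw [Complex.star_def, Complex.conj_I, neg_smul, ← smul_neg, neg_sub]
        · intro h2
          rcases smul_eq_zero.mp h2 with h3 | h3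
          · exact Complex.I_ne_zero h3
          · have h4 : e = eᴴ := sub_eq_zero.mp h3
            have h5 : e + e = 0 := by rw [← h4] at h1; exact h1
            have : (2 : ℂ) • e = 0 := by rw [two_smul]; exact h5
            rcases smul_eq_zero.mp this with h6 | h6
            · norm_num at h6
            · exact hene h6
        · rw [LinearMap.map_smul, LinearMap.map_sub]
          exact Submodule.smul_mem _ _ (Submodule.sub_mem _ hYemem hYestar)
      · refine ⟨e + eᴴ, ?_, h1, ?_⟩
        · show (e + eᴴ)ᴴ = e + eᴴ
          rw [Matrix.conjTranspose_add, Matrix.conjTranspose_conjTranspose, add_comm]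
        · rw [LinearMap.map_add]
          exact Submodule.add_mem _ hYemem hYestar
    -- build the perturbation
    have hdTherm : (dᵀ).IsHermitian := hdherm.transpose
    obtain ⟨ε, hε0, hP, hM⟩ := ExtAux.exists_eps hdTherm
    set Dp := ExtAux.Kmap V ((ε : ℂ) • dᵀ) with hDp
    have hchoiDp : choi Dp = ExtAux.What V * ((ε : ℂ) • dᵀ) * (ExtAux.What V)ᴴ :=
      ExtAux.choi_Kmap V _
    have htrDp : ∀ a ∈ J, Matrix.trace (Dp a) = 0 := by
      intro a ha
      rw [hDp, ExtAux.trace_Kmap]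
      have h1 : ((ε : ℂ) • dᵀ)ᵀ = (ε : ℂ) • d := by
        rw [Matrix.transpose_smul, Matrix.transpose_transpose]
      rw [h1, LinearMap.map_smul, Matrix.smul_mul, Matrix.trace_smul,
        (ExtAux.mem_hsPerp_iff_trace_mul hJ).mp hdmem a ha, smul_zero]
    have hDpne : Dp ≠ 0 := by
      intro h0
      have h1 : choi Dp = 0 := by rw [h0, ExtAux.choi_zero]
      rw [hchoiDp] at h1
      have h2 := ExtAux.factor_unique hV h1
      rcases smul_eq_zero.mp h2 with h3 | h3
      · exact Complex.ofReal_ne_zero.mpr hε0.ne' h3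
      · exact hdne (by rw [← Matrix.transpose_transpose d, h3, Matrix.transpose_zero])
    set Ψ1 := Φ + Dp with hΨ1def
    set Ψ2 := Φ - Dp with hΨ2def
    have hchoi1 : choi Ψ1 = ExtAux.What V * (1 + (ε : ℂ) • dᵀ) * (ExtAux.What V)ᴴ := by
      rw [hΨ1def, ExtAux.choi_add, hchoiΦ, hchoiDp, Matrix.mul_add, Matrix.add_mul,
        Matrix.mul_one]
    have hchoi2 : choi Ψ2 = ExtAux.What V * (1 - (ε : ℂ) • dᵀ) * (ExtAux.What V)ᴴ := by
      rw [hΨ2def, ExtAux.choi_sub, hchoiΦ, hchoiDp, Matrix.mul_sub, Matrix.sub_mul,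
        Matrix.mul_one]
    have hmem1 : Ψ1 ∈ {Ψ : Matrix n n ℂ →ₗ[ℂ] Matrix m m ℂ |
        (choi Ψ).PosSemidef ∧ ∀ a ∈ J, Matrix.trace (Ψ a) = Matrix.trace a} := by
      constructor
      · rw [hchoi1]
        exact hP.mul_mul_conjTranspose_same _
      · intro a ha
        rw [hΨ1def, LinearMap.add_apply, Matrix.trace_add, hΦtp a ha, htrDp a ha, add_zero]
    have hmem2 : Ψ2 ∈ {Ψ : Matrix n n ℂ →ₗ[ℂ] Matrix m m ℂ |
        (choi Ψ).PosSemidef ∧ ∀ a ∈ J, Matrix.trace (Ψ a) = Matrix.trace a} := by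
      constructor
      · rw [hchoi2]
        exact hM.mul_mul_conjTranspose_same _
      · intro a ha
        rw [hΨ2def, LinearMap.sub_apply, Matrix.trace_sub, hΦtp a ha, htrDp a ha, sub_zero]
    have hseg : Φ ∈ openSegment ℝ Ψ1 Ψ2 := by
      refine ⟨1/2, 1/2, by norm_num, by norm_num, by norm_num, ?_⟩
      rw [hΨ1def, hΨ2def]
      module
    have := ((mem_extremePoints.mp hext).2 Ψ1 hmem1 Ψ2 hmem2 hseg).1
    rw [hΨ1def] at this
    exact hDpne (by rwa [add_eq_left] at this)
  · -- independent ⇒ extreme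
    intro hind
    rw [mem_extremePoints]
    refine ⟨⟨hchoiΦpsd, hΦtp⟩, ?_⟩
    rintro Ψ1 hΨ1 Ψ2 hΨ2 ⟨a, b, ha, hb, hab, hseg⟩
    have hchoicomb : a • choi Ψ1 + b • choi Ψ2 = choi Φ := by
      rw [← ExtAux.choi_real_comb, hseg]
    have hker : ∀ v, (ExtAux.What V)ᴴ *ᵥ v = 0 → (choi Ψ1 - choi Φ) *ᵥ v = 0 := by
      intro v hv
      have hΦv : choi Φ *ᵥ v = 0 := by
        rw [hchoiΦ, ← Matrix.mulVec_mulVec, hv, Matrix.mulVec_zero]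
      have hq0 : star v ⬝ᵥ choi Φ *ᵥ v = 0 := by rw [hΦv, dotProduct_zero]
      have hcomb : (a : ℂ) * (star v ⬝ᵥ choi Ψ1 *ᵥ v) + (b : ℂ) * (star v ⬝ᵥ choi Ψ2 *ᵥ v)
          = 0 := by
        have h1 := congrArg (fun X => star v ⬝ᵥ X *ᵥ v) hchoicomb
        simp only [Matrix.add_mulVec, Matrix.smul_mulVec, dotProduct_add,
          dotProduct_smul] at h1
        rw [hq0] at h1
        rw [← h1]
        norm_num [Complex.real_smul]
      have hq1 : 0 ≤ star v ⬝ᵥ choi Ψ1 *ᵥ v := hΨ1.1.dotProduct_mulVec_nonneg v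
      have hq2 : 0 ≤ star v ⬝ᵥ choi Ψ2 *ᵥ v := hΨ2.1.dotProduct_mulVec_nonneg v
      have h1 : 0 ≤ (a : ℂ) * (star v ⬝ᵥ choi Ψ1 *ᵥ v) :=
        mul_nonneg (Complex.zero_le_real.mpr ha.le) hq1
      have h2 : 0 ≤ (b : ℂ) * (star v ⬝ᵥ choi Ψ2 *ᵥ v) :=
        mul_nonneg (Complex.zero_le_real.mpr hb.le) hq2
      have h3 : (a : ℂ) * (star v ⬝ᵥ choi Ψ1 *ᵥ v) = 0 := by
        have h4 : (a : ℂ) * (star v ⬝ᵥ choi Ψ1 *ᵥ v)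
            = -((b : ℂ) * (star v ⬝ᵥ choi Ψ2 *ᵥ v)) :=
          eq_neg_of_add_eq_zero_left hcomb
        have h5 : (a : ℂ) * (star v ⬝ᵥ choi Ψ1 *ᵥ v) ≤ 0 := by
          rw [h4]
          exact neg_nonpos_of_nonneg h2
        exact le_antisymm h5 h1
      have h6 : star v ⬝ᵥ choi Ψ1 *ᵥ v = 0 := by
        rcases mul_eq_zero.mp h3 with h7 | h7
        · exact absurd h7 (Complex.ofReal_ne_zero.mpr ha.ne')
        · exact h7
      have h8 : choi Ψ1 *ᵥ v = 0 := (hΨ1.1.dotProduct_mulVec_zero_iff v).mp h6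
      rw [Matrix.sub_mulVec, h8, hΦv, sub_zero]
    have hHherm : (choi Ψ1 - choi Φ).IsHermitian := hΨ1.1.1.sub hchoiΦpsd.1
    obtain ⟨c, hc⟩ := ExtAux.herm_factor hV hHherm hker
    have hD : Ψ1 - Φ = ExtAux.Kmap V c :=
      ExtAux.choi_inj (by rw [ExtAux.choi_sub, ExtAux.choi_Kmap, ← hc])
    have htr : ∀ a' ∈ J, Matrix.trace (ExtAux.Ysum V cᵀ * a') = 0 := by
      intro a' ha'
      have h1 : Matrix.trace ((Ψ1 - Φ) a') = 0 := by
        rw [LinearMap.sub_apply, Matrix.trace_sub, hΨ1.2 a' ha', hΦtp a' ha', sub_self]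
      rw [hD, ExtAux.trace_Kmap] at h1
      exact h1
    have hmem : ExtAux.Ysum V cᵀ ∈ hsPerp J :=
      (ExtAux.mem_hsPerp_iff_trace_mul hJ).mpr htr
    rw [← hxspan] at hmem
    obtain ⟨bc, hbc⟩ := (Submodule.mem_span_range_iff_exists_fun ℂ).mp hmem
    have hrel : ∑ i : (Fin N × Fin N) ⊕ Fin M,
        (Sum.elim (fun p : Fin N × Fin N => cᵀ p.1 p.2) (fun m_ => -(bc m_)) i) •
          (Sum.elim (fun kl : Fin N × Fin N => (V kl.1)ᴴ * V kl.2) x i) = 0 := by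
      rw [Fintype.sum_sum_type]
      simp only [Sum.elim_inl, Sum.elim_inr]
      have h1 : ∑ p : Fin N × Fin N, cᵀ p.1 p.2 • ((V p.1)ᴴ * V p.2)
          = ExtAux.Ysum V cᵀ := by
        rw [Fintype.sum_prod_type]
        rfl
      have h2 : ∑ m_, (-(bc m_)) • x m_ = -(ExtAux.Ysum V cᵀ) := by
        rw [← hbc]
        simp [neg_smul, Finset.sum_neg_distrib]
      rw [h1, h2, add_neg_cancel]
    have hall := Fintype.linearIndependent_iff.mp hind _ hrel
    have hc0 : c = 0 := by
      ext k l
      have := hall (Sum.inl (l, k))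
      simpa [Matrix.transpose_apply] using this
    have hH0 : choi Ψ1 - choi Φ = 0 := by
      rw [hc, hc0, Matrix.mul_zero, Matrix.zero_mul]
    have hΨ1Φ : Ψ1 = Φ := by
      have h1 : choi (Ψ1 - Φ) = choi 0 := by
        rw [ExtAux.choi_sub, hH0, ExtAux.choi_zero]
      have h2 := ExtAux.choi_inj h1
      exact sub_eq_zero.mp h2
    refine ⟨hΨ1Φ, ?_⟩
    have hb2 : b • Ψ2 = b • Φ := by
      have h1 := hseg
      rw [hΨ1Φ] at h1
      have hba : (1 - a) = b := by linarith
      calc b • Ψ2 = (a • Φ + b • Ψ2) - a • Φ := by module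
        _ = Φ - a • Φ := by rw [h1]
        _ = (1 - a) • Φ := by module
        _ = b • Φ := by rw [hba]
    calc Ψ2 = b⁻¹ • (b • Ψ2) := by rw [smul_smul, inv_mul_cancel₀ hb.ne', one_smul]
      _ = b⁻¹ • (b • Φ) := by rw [hb2]
      _ = Φ := by rw [smul_smul, inv_mul_cancel₀ hb.ne', one_smul]
end

section
/- Let Φ : A → B be a generalized channel with minimal Kraus representation Φ(a) = Σ_k V_k a V_k*, and let Φ^C : A → D = ⊕_{i,j} B(C^{n_{i,j}}) be the conjugate map Φ^C(a) = ⊕_{i,j} Σ_{k,l ∈ I(i,j)} Tr(V_k a V_l*) |k⟩⟨l|. Then Φ is an extreme point of C_J(A,B) if and only if Φ^C(J) = D. -/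
open Matrix ComplexOrder

variable {n m : Type*} [Fintype n] [DecidableEq n] [Fintype m] [DecidableEq m]

/-- The conjugate map `Φ^C(a)_{kl} = Tr(V_k a V_l*)` associated to a Kraus family. -/
noncomputable def conjMap {N : ℕ} (V : Fin N → Matrix m n ℂ) :
    Matrix n n ℂ →ₗ[ℂ] Matrix (Fin N) (Fin N) ℂ where
  toFun a := Matrix.of fun k l => Matrix.trace (V k * a * (V l)ᴴ)
  map_add' a b := by
    ext k l
    simp [Matrix.mul_add, Matrix.add_mul]
  map_smul' c a := by
    ext k l
    simp [Matrix.mul_smul, Matrix.smul_mul]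

set_option linter.unusedSectionVars false

variable {N : ℕ}

namespace ExtremeAux

noncomputable def psiD (V : Fin N → Matrix m n ℂ) (D : Matrix (Fin N) (Fin N) ℂ) :
    Matrix n n ℂ →ₗ[ℂ] Matrix m m ℂ where
  toFun a := ∑ k, ∑ l, D k l • (V k * a * (V l)ᴴ)
  map_add' a b := by
    simp [Matrix.mul_add, Matrix.add_mul, smul_add, Finset.sum_add_distrib]
  map_smul' c a := by
    simp only [Matrix.mul_smul, Matrix.smul_mul, RingHom.id_apply, Finset.smul_sum]
    refine Finset.sum_congr rfl fun k _ => Finset.sum_congr rfl fun l _ => ?_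
    rw [smul_comm]

lemma psiD_apply (V : Fin N → Matrix m n ℂ) (D : Matrix (Fin N) (Fin N) ℂ) (a : Matrix n n ℂ) :
    psiD V D a = ∑ k, ∑ l, D k l • (V k * a * (V l)ᴴ) := rfl

noncomputable def Wmat (V : Fin N → Matrix m n ℂ) : Matrix (m × n) (Fin N) ℂ :=
  Matrix.of fun p k => V k p.1 p.2

lemma mul_std_mul_apply (A : Matrix m n ℂ) (B : Matrix m n ℂ) (i : n) (j : n) (p q : m) :
    (A * Matrix.single i j (1:ℂ) * Bᴴ) p q = A p i * (starRingEnd ℂ) (B q j) := by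
  rw [Matrix.mul_apply]
  simp only [Matrix.mul_apply, Matrix.single, Matrix.of_apply, Matrix.conjTranspose_apply,
    mul_ite, mul_one, mul_zero, ite_mul, zero_mul]
  simp [ite_and, Finset.sum_ite_eq, ite_mul, zero_mul, Complex.star_def]

lemma choi_psiD (V : Fin N → Matrix m n ℂ) (D : Matrix (Fin N) (Fin N) ℂ) :
    choi (psiD V D) = Wmat V * D * (Wmat V)ᴴ := by
  ext p q
  simp only [choi, psiD_apply, Matrix.of_apply, Matrix.sum_apply, Matrix.smul_apply,
    mul_std_mul_apply, smul_eq_mul]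
  simp only [Matrix.mul_apply, Matrix.conjTranspose_apply, Wmat, Matrix.of_apply,
    Finset.sum_mul, Matrix.star_apply, Complex.star_def]
  rw [Finset.sum_comm]
  refine Finset.sum_congr rfl (fun l _ => Finset.sum_congr rfl fun k _ => ?_)
  ring

lemma trace_psiD (V : Fin N → Matrix m n ℂ) (D : Matrix (Fin N) (Fin N) ℂ) (a : Matrix n n ℂ) :
    Matrix.trace (psiD V D a) = ∑ k, ∑ l, D k l * (conjMap V a) k l := by
  rw [psiD_apply]
  simp only [Matrix.trace_sum, Matrix.trace_smul, smul_eq_mul]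
  rfl

lemma choi_inj {Ψ Ψ' : Matrix n n ℂ →ₗ[ℂ] Matrix m m ℂ} (h : choi Ψ = choi Ψ') : Ψ = Ψ' := by
  have hb : ∀ i j, Ψ (Matrix.single i j (1:ℂ)) = Ψ' (Matrix.single i j 1) := by
    intro i j
    ext p q
    exact congrFun (congrFun h (p, i)) (q, j)
  apply LinearMap.ext
  intro a
  have ha : a = ∑ i, ∑ j, a i j • Matrix.single i j (1:ℂ) := by
    conv_lhs => rw [Matrix.matrix_eq_sum_single a]
    refine Finset.sum_congr rfl fun i _ => Finset.sum_congr rfl fun j _ => ?_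
    rw [Matrix.smul_single, smul_eq_mul, mul_one]
  rw [ha]
  simp only [map_sum, LinearMap.map_smul, hb]


lemma Wmat_mulVec_zero {V : Fin N → Matrix m n ℂ} (hV : LinearIndependent ℂ V)
    {x : Fin N → ℂ} (hx : Wmat V *ᵥ x = 0) : x = 0 := by
  have h0 : ∑ k, x k • V k = 0 := by
    ext p q
    have := congrFun hx (p, q)
    simpa [Wmat, Matrix.mulVec, dotProduct, Matrix.sum_apply, mul_comm] using this
  funext k
  exact Fintype.linearIndependent_iff.mp hV x h0 k

lemma Wmat_mul_cancel {V : Fin N → Matrix m n ℂ} (hV : LinearIndependent ℂ V)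
    {α : Type*} [Fintype α] {X Y : Matrix (Fin N) α ℂ} (h : Wmat V * X = Wmat V * Y) : X = Y := by
  ext k j
  have hcol : Wmat V *ᵥ (fun k => X k j - Y k j) = 0 := by
    ext p
    have := congrFun (congrFun h p) j
    simp only [Matrix.mul_apply] at this
    simp [Matrix.mulVec, dotProduct, mul_sub, Finset.sum_sub_distrib, this]
  have := congrFun (Wmat_mulVec_zero hV hcol) k
  simpa [sub_eq_zero] using this

lemma WDW_inj {V : Fin N → Matrix m n ℂ} (hV : LinearIndependent ℂ V)
    {D D' : Matrix (Fin N) (Fin N) ℂ}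
    (h : Wmat V * D * (Wmat V)ᴴ = Wmat V * D' * (Wmat V)ᴴ) : D = D' := by
  rw [Matrix.mul_assoc, Matrix.mul_assoc] at h
  have h2 : D * (Wmat V)ᴴ = D' * (Wmat V)ᴴ := Wmat_mul_cancel hV h
  have h3 : Wmat V * Dᴴ = Wmat V * D'ᴴ := by
    have := congrArg Matrix.conjTranspose h2
    simpa [Matrix.conjTranspose_mul] using this
  have := Wmat_mul_cancel hV h3
  calc D = Dᴴᴴ := by rw [Matrix.conjTranspose_conjTranspose]
  _ = D'ᴴᴴ := by rw [this]
  _ = D' := by rw [Matrix.conjTranspose_conjTranspose]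

lemma psiD_inj {V : Fin N → Matrix m n ℂ} (hV : LinearIndependent ℂ V)
    {D D' : Matrix (Fin N) (Fin N) ℂ} (h : psiD V D = psiD V D') : D = D' := by
  apply WDW_inj hV
  rw [← choi_psiD, ← choi_psiD, h]


lemma gram_isUnit {V : Fin N → Matrix m n ℂ} (hV : LinearIndependent ℂ V) :
    IsUnit ((Wmat V)ᴴ * Wmat V) := by
  set W := Wmat V
  rw [← Matrix.mulVec_injective_iff_isUnit]
  intro x y hxy
  have hker : ∀ z : Fin N → ℂ, (Wᴴ * W) *ᵥ z = 0 → z = 0 := by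
    intro z hz
    have h1 : star z ⬝ᵥ ((Wᴴ * W) *ᵥ z) = 0 := by rw [hz, dotProduct_zero]
    have h2 : star (W *ᵥ z) ⬝ᵥ (W *ᵥ z) = 0 := by
      rw [Matrix.star_mulVec, ← dotProduct_mulVec]
      rw [← Matrix.mulVec_mulVec] at h1
      exact h1
    exact Wmat_mulVec_zero hV (dotProduct_star_self_eq_zero.mp h2)
  have : (Wᴴ * W) *ᵥ (x - y) = 0 := by
    rw [Matrix.mulVec_sub, hxy, sub_self]
  have := hker _ this
  rwa [sub_eq_zero] at this

lemma exists_rep {V : Fin N → Matrix m n ℂ} (hV : LinearIndependent ℂ V)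
    {C : Matrix (m × n) (m × n) ℂ} (hC : C.IsHermitian)
    (hker : ∀ x, (Wmat V)ᴴ *ᵥ x = 0 → C *ᵥ x = 0) :
    ∃ D : Matrix (Fin N) (Fin N) ℂ, C = Wmat V * D * (Wmat V)ᴴ := by
  set W := Wmat V with hW
  set G := Wᴴ * W with hG
  have hGu : IsUnit G := gram_isUnit hV
  have hGdet : IsUnit G.det := (Matrix.isUnit_iff_isUnit_det G).mp hGu
  have hGinv : G * G⁻¹ = 1 := Matrix.mul_nonsing_inv G hGdet
  have hGinv' : G⁻¹ * G = 1 := Matrix.nonsing_inv_mul G hGdet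
  have hGh : Gᴴ = G := by rw [hG, Matrix.conjTranspose_mul, Matrix.conjTranspose_conjTranspose]
  have hGinvh : (G⁻¹)ᴴ = G⁻¹ := by rw [Matrix.conjTranspose_nonsing_inv, hGh]
  set P := W * G⁻¹ * Wᴴ with hP
  have hPh : Pᴴ = P := by
    rw [hP, Matrix.conjTranspose_mul, Matrix.conjTranspose_mul,
      Matrix.conjTranspose_conjTranspose, hGinvh, Matrix.mul_assoc]
  have hWP : Wᴴ * P = Wᴴ := by
    calc Wᴴ * (W * G⁻¹ * Wᴴ) = (Wᴴ * W) * G⁻¹ * Wᴴ := by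
          simp only [Matrix.mul_assoc]
    _ = Wᴴ := by rw [← hG, hGinv, Matrix.one_mul]
  have hC1P : C * (1 - P) = 0 := by
    have hWker : Wᴴ * (1 - P) = 0 := by rw [Matrix.mul_sub, Matrix.mul_one, hWP, sub_self]
    ext i j
    have hx : Wᴴ *ᵥ (fun k => (1 - P) k j) = 0 := by
      ext s
      have := congrFun (congrFun hWker s) j
      simpa [Matrix.mul_apply, Matrix.mulVec, dotProduct] using this
    have := congrFun (hker _ hx) i
    simpa [Matrix.mul_apply, Matrix.mulVec, dotProduct] using this
  have hCP : C * P = C := by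
    have h := hC1P
    rw [Matrix.mul_sub, Matrix.mul_one, sub_eq_zero] at h
    exact h.symm
  have hPC : P * C = C := by
    have := congrArg Matrix.conjTranspose hCP
    rwa [Matrix.conjTranspose_mul, hPh, hC.eq] at this
  refine ⟨G⁻¹ * Wᴴ * C * W * G⁻¹, ?_⟩
  have : W * (G⁻¹ * Wᴴ * C * W * G⁻¹) * Wᴴ = P * C * P := by
    rw [hP]
    simp only [Matrix.mul_assoc]
  rw [this, hPC, hCP]


lemma pairing_zero_of_top {V : Fin N → Matrix m n ℂ} {J : Submodule ℂ (Matrix n n ℂ)}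
    (h : Submodule.map (conjMap V) J = ⊤) {X : Matrix (Fin N) (Fin N) ℂ}
    (hX : ∀ a ∈ J, ∑ k, ∑ l, X k l * (conjMap V a) k l = 0) : X = 0 := by
  have hf : ∀ M : Matrix (Fin N) (Fin N) ℂ, ∑ k, ∑ l, X k l * M k l = 0 := by
    intro M
    have hM : M ∈ Submodule.map (conjMap V) J := h.symm ▸ Submodule.mem_top
    obtain ⟨a, haJ, rfl⟩ := hM
    exact hX a haJ
  ext k l
  have := hf (Matrix.single k l 1)
  simpa [Matrix.single, ite_and, Finset.sum_ite_eq, mul_ite] using this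

lemma exists_pairing_nonzero {V : Fin N → Matrix m n ℂ} {J : Submodule ℂ (Matrix n n ℂ)}
    (h : Submodule.map (conjMap V) J ≠ ⊤) :
    ∃ X : Matrix (Fin N) (Fin N) ℂ, X ≠ 0 ∧
      ∀ a ∈ J, ∑ k, ∑ l, X k l * (conjMap V a) k l = 0 := by
  obtain ⟨f, hf0, hfbot⟩ := Submodule.exists_dual_map_eq_bot_of_lt_top
    (lt_top_iff_ne_top.mpr h) inferInstance
  set X : Matrix (Fin N) (Fin N) ℂ := Matrix.of fun k l => f (Matrix.single k l 1) with hXdef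
  have hfX : ∀ M : Matrix (Fin N) (Fin N) ℂ, f M = ∑ k, ∑ l, X k l * M k l := by
    intro M
    conv_lhs => rw [Matrix.matrix_eq_sum_single M]
    rw [map_sum]
    refine Finset.sum_congr rfl fun k _ => ?_
    rw [map_sum]
    refine Finset.sum_congr rfl fun l _ => ?_
    have : Matrix.single k l (M k l) = M k l • Matrix.single k l (1:ℂ) := by
      rw [Matrix.smul_single, smul_eq_mul, mul_one]
    rw [this, LinearMap.map_smul, smul_eq_mul, hXdef, mul_comm]
    rfl
  refine ⟨X, ?_, ?_⟩
  · intro hX0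
    apply hf0
    ext M
    rw [hfX M, hX0]
    simp
  · intro a ha
    have : f ((conjMap V) a) ∈ (⊥ : Submodule ℂ ℂ) := by
      rw [← hfbot]
      exact Submodule.mem_map_of_mem (Submodule.mem_map_of_mem ha)
    rw [Submodule.mem_bot] at this
    rw [← hfX]
    exact this


lemma conjTranspose_mem {J : Submodule ℂ (Matrix n n ℂ)}
    (hJ : J = Submodule.span ℂ {a : Matrix n n ℂ | a ∈ J ∧ a.PosSemidef})
    {a : Matrix n n ℂ} (ha : a ∈ J) : aᴴ ∈ J := by
  rw [hJ] at ha
  refine Submodule.span_induction ?_ ?_ ?_ ?_ ha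
  · intro x hx
    rw [hx.2.isHermitian.eq]
    rw [hJ]
    exact Submodule.subset_span hx
  · simp
  · intro x y _ _ hx hy
    rw [Matrix.conjTranspose_add]
    exact Submodule.add_mem J hx hy
  · intro c x _ hx
    rw [Matrix.conjTranspose_smul]
    exact Submodule.smul_mem J _ hx

lemma conjMap_conjTranspose (V : Fin N → Matrix m n ℂ) (a : Matrix n n ℂ) :
    conjMap V aᴴ = (conjMap V a)ᴴ := by
  ext k l
  show Matrix.trace (V k * aᴴ * (V l)ᴴ) = star (Matrix.trace (V l * a * (V k)ᴴ))
  rw [← Matrix.trace_conjTranspose]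
  congr 1
  simp [Matrix.conjTranspose_mul, Matrix.mul_assoc]

lemma ann_conjTranspose {V : Fin N → Matrix m n ℂ} {J : Submodule ℂ (Matrix n n ℂ)}
    (hJ : J = Submodule.span ℂ {a : Matrix n n ℂ | a ∈ J ∧ a.PosSemidef})
    {X : Matrix (Fin N) (Fin N) ℂ}
    (hX : ∀ a ∈ J, ∑ k, ∑ l, X k l * (conjMap V a) k l = 0) :
    ∀ a ∈ J, ∑ k, ∑ l, Xᴴ k l * (conjMap V a) k l = 0 := by
  intro a ha
  have h := congrArg star (hX aᴴ (conjTranspose_mem hJ ha))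
  rw [star_zero] at h
  rw [star_sum] at h
  simp only [star_sum, star_mul', conjMap_conjTranspose, Matrix.conjTranspose_apply,
    star_star] at h
  rw [Finset.sum_comm] at h
  rw [← h]
  refine Finset.sum_congr rfl fun k _ => Finset.sum_congr rfl fun l _ => ?_
  rw [Matrix.conjTranspose_apply, mul_comm]


lemma one_add_smul_posSemidef {D : Matrix (Fin N) (Fin N) ℂ} (hD : D.IsHermitian)
    (t : ℝ) (ht : ∀ i, 0 ≤ 1 + t * hD.eigenvalues i) :
    ((1 : Matrix (Fin N) (Fin N) ℂ) + (t : ℂ) • D).PosSemidef := by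
  set U : Matrix (Fin N) (Fin N) ℂ := (hD.eigenvectorUnitary : Matrix (Fin N) (Fin N) ℂ) with hUdef
  have hU : U * star U = 1 := (Matrix.mem_unitaryGroup_iff).mp (hD.eigenvectorUnitary).2
  have hdiag : Matrix.diagonal (fun i => ((1 + t * hD.eigenvalues i : ℝ) : ℂ))
      = 1 + (t : ℂ) • Matrix.diagonal (RCLike.ofReal ∘ hD.eigenvalues) := by
    ext i j
    rcases eq_or_ne i j with rfl | h
    · simp only [Matrix.diagonal_apply_eq, Matrix.add_apply, Matrix.smul_apply,
        Matrix.one_apply_eq, Function.comp_apply, smul_eq_mul]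
      push_cast
      norm_num [RCLike.ofReal_alg]
    · simp [Matrix.diagonal_apply_ne _ h, Matrix.one_apply_ne h]
  have key : (1 : Matrix (Fin N) (Fin N) ℂ) + (t : ℂ) • D
      = U * Matrix.diagonal (fun i => ((1 + t * hD.eigenvalues i : ℝ) : ℂ)) * Uᴴ := by
    rw [← Matrix.star_eq_conjTranspose, hdiag, Matrix.mul_add, Matrix.mul_one, Matrix.add_mul,
      hU, Matrix.mul_smul, Matrix.smul_mul]
    congr 1
    conv_lhs => rw [hD.spectral_theorem]
    simp only [Unitary.conjStarAlgAut_apply, hUdef, Unitary.coe_star]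
  rw [key]
  exact (Matrix.posSemidef_diagonal_iff.mpr
    (fun i => Complex.zero_le_real.mpr (ht i))).mul_mul_conjTranspose_same U

lemma perturb_posSemidef {D : Matrix (Fin N) (Fin N) ℂ} (hD : D.IsHermitian) :
    ∃ ε : ℝ, 0 < ε ∧
      ((1 : Matrix (Fin N) (Fin N) ℂ) + (ε : ℂ) • D).PosSemidef ∧
      ((1 : Matrix (Fin N) (Fin N) ℂ) - (ε : ℂ) • D).PosSemidef := by
  set C : ℝ := ∑ i, |hD.eigenvalues i| with hC
  have hC0 : 0 ≤ C := Finset.sum_nonneg fun i _ => abs_nonneg _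
  have hbound : ∀ t : ℝ, |t| ≤ 1 / (C + 1) → ∀ i, 0 ≤ 1 + t * hD.eigenvalues i := by
    intro t ht i
    have h1 : |hD.eigenvalues i| ≤ C :=
      Finset.single_le_sum (f := fun i => |hD.eigenvalues i|) (fun _ _ => abs_nonneg _)
        (Finset.mem_univ i)
    have h2 : |t * hD.eigenvalues i| ≤ (1 / (C + 1)) * C := by
      rw [abs_mul]
      exact mul_le_mul ht h1 (abs_nonneg _) (by positivity)
    have h3 : (1 / (C + 1)) * C < 1 := by
      rw [div_mul_eq_mul_div, one_mul, div_lt_one (by positivity)]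
      linarith
    have h4 := neg_abs_le (t * hD.eigenvalues i)
    linarith
  refine ⟨1 / (C + 1), by positivity, ?_, ?_⟩
  · exact one_add_smul_posSemidef hD _ (hbound _ (le_of_eq (abs_of_pos (by positivity))))
  · have := one_add_smul_posSemidef hD (-(1 / (C + 1)))
      (hbound _ (by rw [abs_neg, abs_of_pos (by positivity)]))
    have heq : (1 : Matrix (Fin N) (Fin N) ℂ) + ((-(1 / (C + 1)) : ℝ) : ℂ) • D
        = (1 : Matrix (Fin N) (Fin N) ℂ) - ((1 / (C + 1) : ℝ) : ℂ) • D := by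
      push_cast
      rw [neg_smul, ← sub_eq_add_neg]
    rwa [heq] at this


lemma psiD_add (V : Fin N → Matrix m n ℂ) (E F : Matrix (Fin N) (Fin N) ℂ) :
    psiD V (E + F) = psiD V E + psiD V F := by
  apply LinearMap.ext
  intro a
  simp [psiD_apply, Matrix.add_apply, add_smul, Finset.sum_add_distrib]

lemma psiD_smul (V : Fin N → Matrix m n ℂ) (c : ℂ) (E : Matrix (Fin N) (Fin N) ℂ) :
    psiD V (c • E) = c • psiD V E := by
  apply LinearMap.ext
  intro a
  simp [psiD_apply, Matrix.smul_apply, smul_smul, Finset.smul_sum]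

lemma choi_add (Ψ Ψ' : Matrix n n ℂ →ₗ[ℂ] Matrix m m ℂ) :
    choi (Ψ + Ψ') = choi Ψ + choi Ψ' := by
  ext p q
  simp [choi]

lemma choi_real_smul (r : ℝ) (Ψ : Matrix n n ℂ →ₗ[ℂ] Matrix m m ℂ) :
    choi (r • Ψ) = (r : ℂ) • choi Ψ := by
  ext p q
  simp [choi, Complex.real_smul]

end ExtremeAux

/-- a generalized channel `Φ` with minimal Kraus representation
`Φ(a) = Σ_k V_k a V_k*` is an extreme point of `C_J(A,B)` iff its conjugate map
satisfies `Φ^C(J) = D`. -/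
theorem extreme_iff_conjMap_surjective
    (J : Submodule ℂ (Matrix n n ℂ)) (hJ : PositivelyGenerated J)
    {N : ℕ} (V : Fin N → Matrix m n ℂ) (hV : LinearIndependent ℂ V)
    (Φ : Matrix n n ℂ →ₗ[ℂ] Matrix m m ℂ)
    (hΦ : ∀ a : Matrix n n ℂ, Φ a = ∑ k, V k * a * (V k)ᴴ)
    (hΦtp : ∀ a ∈ J, Matrix.trace (Φ a) = Matrix.trace a) :
    Φ ∈ Set.extremePoints ℝ
        {Ψ : Matrix n n ℂ →ₗ[ℂ] Matrix m m ℂ |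
          (choi Ψ).PosSemidef ∧ ∀ a ∈ J, Matrix.trace (Ψ a) = Matrix.trace a} ↔
      Submodule.map (conjMap V) J = ⊤ := by
  classical
  have hJ' : J = Submodule.span ℂ {a : Matrix n n ℂ | a ∈ J ∧ a.PosSemidef} := hJ
  set W := ExtremeAux.Wmat V with hWdef
  -- Φ is the Kraus map with coefficient matrix 1
  have hΦeq : Φ = ExtremeAux.psiD V 1 := by
    apply LinearMap.ext
    intro a
    rw [hΦ a, ExtremeAux.psiD_apply]
    refine Finset.sum_congr rfl fun k _ => ?_
    symm
    rw [Finset.sum_eq_single k]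
    · simp [Matrix.one_apply_eq]
    · intro l _ hl
      simp [Matrix.one_apply_ne (Ne.symm hl)]
    · intro h
      exact absurd (Finset.mem_univ k) h
  have hΦS : (choi Φ).PosSemidef ∧ ∀ a ∈ J, Matrix.trace (Φ a) = Matrix.trace a := by
    refine ⟨?_, hΦtp⟩
    rw [hΦeq, ExtremeAux.choi_psiD, Matrix.mul_one]
    exact Matrix.posSemidef_self_mul_conjTranspose W
  constructor
  · -- extreme → surjective
    intro hext
    by_contra hne
    obtain ⟨X0, hX0ne, hX0ann⟩ := ExtremeAux.exists_pairing_nonzero hne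
    -- upgrade to a nonzero Hermitian annihilating matrix
    have hannX0H : ∀ a ∈ J, ∑ k, ∑ l, X0ᴴ k l * (conjMap V a) k l = 0 :=
      ExtremeAux.ann_conjTranspose hJ' hX0ann
    obtain ⟨D, hDh, hDne, hDann⟩ :
        ∃ D : Matrix (Fin N) (Fin N) ℂ, D.IsHermitian ∧ D ≠ 0 ∧
          ∀ a ∈ J, ∑ k, ∑ l, D k l * (conjMap V a) k l = 0 := by
      by_cases hcase : X0 + X0ᴴ = 0
      · refine ⟨Complex.I • (X0 - X0ᴴ), ?_, ?_, ?_⟩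
        · show (Complex.I • (X0 - X0ᴴ))ᴴ = _
          rw [Matrix.conjTranspose_smul, Matrix.conjTranspose_sub,
            Matrix.conjTranspose_conjTranspose, Complex.star_def, Complex.conj_I,
            neg_smul, ← smul_neg, neg_sub]
        · intro h0
          rcases smul_eq_zero.mp h0 with h | h
          · exact Complex.I_ne_zero h
          · have hX0H : X0ᴴ = -X0 := eq_neg_of_add_eq_zero_right hcase
            rw [hX0H, sub_neg_eq_add] at h
            apply hX0ne
            have h2 : (2 : ℂ) • X0 = 0 := by rw [two_smul]; exact h
            rcases smul_eq_zero.mp h2 with h' | h'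
            · norm_num at h'
            · exact h'
        · intro a ha
          have h1 := hX0ann a ha
          have h2 := hannX0H a ha
          have : ∑ k, ∑ l, (Complex.I • (X0 - X0ᴴ)) k l * (conjMap V a) k l
              = Complex.I * ((∑ k, ∑ l, X0 k l * (conjMap V a) k l)
                - ∑ k, ∑ l, X0ᴴ k l * (conjMap V a) k l) := by
            rw [mul_sub, Finset.mul_sum, Finset.mul_sum, ← Finset.sum_sub_distrib]
            refine Finset.sum_congr rfl fun k _ => ?_
            rw [Finset.mul_sum, Finset.mul_sum, ← Finset.sum_sub_distrib]
            refine Finset.sum_congr rfl fun l _ => ?_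
            simp only [Matrix.smul_apply, Matrix.sub_apply, Matrix.conjTranspose_apply,
              smul_eq_mul, sub_mul]
            ring
          rw [this, h1, h2, sub_zero, mul_zero]
      · refine ⟨X0 + X0ᴴ, ?_, hcase, ?_⟩
        · show (X0 + X0ᴴ)ᴴ = _
          rw [Matrix.conjTranspose_add, Matrix.conjTranspose_conjTranspose, add_comm]
        · intro a ha
          have h1 := hX0ann a ha
          have h2 := hannX0H a ha
          have : ∑ k, ∑ l, (X0 + X0ᴴ) k l * (conjMap V a) k l
              = (∑ k, ∑ l, X0 k l * (conjMap V a) k l)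
                + ∑ k, ∑ l, X0ᴴ k l * (conjMap V a) k l := by
            rw [← Finset.sum_add_distrib]
            refine Finset.sum_congr rfl fun k _ => ?_
            rw [← Finset.sum_add_distrib]
            refine Finset.sum_congr rfl fun l _ => ?_
            simp [Matrix.add_apply, add_mul]
          rw [this, h1, h2, add_zero]
    obtain ⟨ε, hε, hPSDp, hPSDm⟩ := ExtremeAux.perturb_posSemidef hDh
    -- trace preservation for the perturbed maps
    have htr : ∀ c : ℂ, ∀ a ∈ J,
        Matrix.trace (ExtremeAux.psiD V (1 + c • D) a) = Matrix.trace a := by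
      intro c a ha
      rw [ExtremeAux.trace_psiD]
      have expand : ∑ k, ∑ l, (1 + c • D) k l * (conjMap V a) k l
          = (∑ k, ∑ l, (1 : Matrix (Fin N) (Fin N) ℂ) k l * (conjMap V a) k l)
            + c * ∑ k, ∑ l, D k l * (conjMap V a) k l := by
        rw [Finset.mul_sum, ← Finset.sum_add_distrib]
        refine Finset.sum_congr rfl fun k _ => ?_
        rw [Finset.mul_sum, ← Finset.sum_add_distrib]
        refine Finset.sum_congr rfl fun l _ => ?_
        simp [Matrix.add_apply, Matrix.smul_apply, add_mul, smul_eq_mul, mul_assoc]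
      rw [expand, hDann a ha, mul_zero, add_zero, ← ExtremeAux.trace_psiD, ← hΦeq]
      exact hΦtp a ha
    set Dp : Matrix (Fin N) (Fin N) ℂ := 1 + (ε : ℂ) • D with hDp
    set Dm : Matrix (Fin N) (Fin N) ℂ := 1 + (-(ε : ℂ)) • D with hDm
    have hDmeq : Dm = 1 - (ε : ℂ) • D := by rw [hDm, neg_smul, ← sub_eq_add_neg]
    set Ψp := ExtremeAux.psiD V Dp with hΨp
    set Ψm := ExtremeAux.psiD V Dm with hΨm
    have hmemp : (choi Ψp).PosSemidef ∧ ∀ a ∈ J, Matrix.trace (Ψp a) = Matrix.trace a := by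
      constructor
      · rw [hΨp, ExtremeAux.choi_psiD]
        exact hPSDp.mul_mul_conjTranspose_same W
      · exact htr (ε : ℂ)
    have hmemm : (choi Ψm).PosSemidef ∧ ∀ a ∈ J, Matrix.trace (Ψm a) = Matrix.trace a := by
      constructor
      · rw [hΨm, ExtremeAux.choi_psiD, hDmeq]
        exact hPSDm.mul_mul_conjTranspose_same W
      · exact htr (-(ε : ℂ))
    have hsum : Ψp + Ψm = (2 : ℂ) • Φ := by
      rw [hΨp, hΨm, ← ExtremeAux.psiD_add]
      have : Dp + Dm = (2 : ℂ) • (1 : Matrix (Fin N) (Fin N) ℂ) := by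
        rw [hDp, hDmeq, two_smul]
        abel
      rw [this, ExtremeAux.psiD_smul, ← hΦeq]
    have hseg : Φ ∈ openSegment ℝ Ψp Ψm := by
      refine ⟨1/2, 1/2, by norm_num, by norm_num, by norm_num, ?_⟩
      rw [← smul_add, hsum, ← smul_assoc]
      have : ((1:ℝ)/2) • (2:ℂ) = (1:ℂ) := by
        rw [Complex.real_smul]
        norm_num
      rw [this, one_smul]
    have := hext.2 hmemp hmemm hseg
    rw [hΨp, hΦeq] at this
    have hD1 : Dp = 1 := ExtremeAux.psiD_inj hV this
    rw [hDp] at hD1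
    have : (ε : ℂ) • D = 0 := by
      have := congrArg (fun M => M - 1) hD1
      simpa [add_sub_cancel_left] using this
    rcases smul_eq_zero.mp this with h | h
    · exact absurd (Complex.ofReal_eq_zero.mp h) (ne_of_gt hε)
    · exact hDne h
  · -- surjective → extreme
    intro htop
    refine ⟨hΦS, ?_⟩
    intro Ψ1 h1 Ψ2 h2 hseg
    obtain ⟨t, s, ht, hs, hts, hcomb⟩ := hseg
    have key : ∀ Ψ : Matrix n n ℂ →ₗ[ℂ] Matrix m m ℂ, (choi Ψ).PosSemidef →
        (∀ a ∈ J, Matrix.trace (Ψ a) = Matrix.trace a) →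
        (∀ x, Wᴴ *ᵥ x = 0 → choi Ψ *ᵥ x = 0) → Ψ = Φ := by
      intro Ψ hpsd htrΨ hker
      obtain ⟨D1, hD1⟩ := ExtremeAux.exists_rep hV hpsd.isHermitian hker
      have hΨeq : Ψ = ExtremeAux.psiD V D1 := by
        apply ExtremeAux.choi_inj
        rw [ExtremeAux.choi_psiD]
        exact hD1
      have hann : ∀ a ∈ J, ∑ k, ∑ l, (D1 - 1) k l * (conjMap V a) k l = 0 := by
        intro a ha
        have e1 : Matrix.trace (ExtremeAux.psiD V D1 a) = Matrix.trace a := by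
          rw [← hΨeq]; exact htrΨ a ha
        have e2 : Matrix.trace (ExtremeAux.psiD V 1 a) = Matrix.trace a := by
          rw [← hΦeq]; exact hΦtp a ha
        rw [ExtremeAux.trace_psiD] at e1 e2
        have : ∑ k, ∑ l, (D1 - 1) k l * (conjMap V a) k l
            = (∑ k, ∑ l, D1 k l * (conjMap V a) k l)
              - ∑ k, ∑ l, (1 : Matrix (Fin N) (Fin N) ℂ) k l * (conjMap V a) k l := by
          rw [← Finset.sum_sub_distrib]
          refine Finset.sum_congr rfl fun k _ => ?_
          rw [← Finset.sum_sub_distrib]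
          refine Finset.sum_congr rfl fun l _ => ?_
          simp [Matrix.sub_apply, sub_mul]
        rw [this, e1, e2, sub_self]
      have hD1one : D1 - 1 = 0 := ExtremeAux.pairing_zero_of_top htop hann
      have : D1 = 1 := by rwa [sub_eq_zero] at hD1one
      rw [hΨeq, this, ← hΦeq]
    have hchoi : (t : ℂ) • choi Ψ1 + (s : ℂ) • choi Ψ2 = choi Φ := by
      rw [← ExtremeAux.choi_real_smul, ← ExtremeAux.choi_real_smul, ← ExtremeAux.choi_add, hcomb]
    have hkerboth : ∀ x, Wᴴ *ᵥ x = 0 → choi Ψ1 *ᵥ x = 0 ∧ choi Ψ2 *ᵥ x = 0 := by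
      intro x hx
      have hΦx : choi Φ *ᵥ x = 0 := by
        rw [hΦeq, ExtremeAux.choi_psiD, Matrix.mul_one, ← Matrix.mulVec_mulVec, hx,
          Matrix.mulVec_zero]
      have h0 : (t : ℂ) * (star x ⬝ᵥ choi Ψ1 *ᵥ x) + (s : ℂ) * (star x ⬝ᵥ choi Ψ2 *ᵥ x) = 0 := by
        have := congrArg (fun v => star x ⬝ᵥ v) (congrArg (fun M => M *ᵥ x) hchoi)
        simp only [Matrix.add_mulVec, Matrix.smul_mulVec, dotProduct_add,
          dotProduct_smul, smul_eq_mul, hΦx, dotProduct_zero] at this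
        exact this
      have hq1 : (0 : ℂ) ≤ star x ⬝ᵥ choi Ψ1 *ᵥ x := h1.1.dotProduct_mulVec_nonneg x
      have hq2 : (0 : ℂ) ≤ star x ⬝ᵥ choi Ψ2 *ᵥ x := h2.1.dotProduct_mulVec_nonneg x
      have htC : (0 : ℂ) ≤ (t : ℂ) := Complex.zero_le_real.mpr ht.le
      have hsC : (0 : ℂ) ≤ (s : ℂ) := Complex.zero_le_real.mpr hs.le
      have hboth := (add_eq_zero_iff_of_nonneg (mul_nonneg htC hq1) (mul_nonneg hsC hq2)).mp h0
      constructor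
      · apply (h1.1.dotProduct_mulVec_zero_iff x).mp
        rcases mul_eq_zero.mp hboth.1 with h | h
        · exact absurd (Complex.ofReal_eq_zero.mp h) (ne_of_gt ht)
        · exact h
      · apply (h2.1.dotProduct_mulVec_zero_iff x).mp
        rcases mul_eq_zero.mp hboth.2 with h | h
        · exact absurd (Complex.ofReal_eq_zero.mp h) (ne_of_gt hs)
        · exact h
    exact key Ψ1 h1.1 h1.2 fun x hx => (hkerboth x hx).1
end

section
/- For any completely positive map Φ with conjugate map Φ^C (defined via a minimal Kraus representation), Tr Φ(a) = Tr Φ^C(a) for all a ∈ A; consequently, Φ is a generalized channel with respect to J if and only if Φ^C is. -/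
open Matrix ComplexOrder

variable {n m : Type*} [Fintype n] [DecidableEq n] [Fintype m] [DecidableEq m]

/-- for a completely positive map `Φ` with minimal Kraus representation
`Φ(a) = Σ_k V_k a V_k*`, one has `Tr Φ(a) = Tr Φ^C(a)` for all `a`; consequently `Φ`
is a generalized channel w.r.t. `J` iff `Φ^C` is. -/
theorem trace_conjMap_eq_and_generalizedChannel_iff
    (J : Submodule ℂ (Matrix n n ℂ))
    {N : ℕ} (V : Fin N → Matrix m n ℂ) (hV : LinearIndependent ℂ V)
    (Φ : Matrix n n ℂ →ₗ[ℂ] Matrix m m ℂ)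
    (hΦ : ∀ a : Matrix n n ℂ, Φ a = ∑ k, V k * a * (V k)ᴴ) :
    (∀ a : Matrix n n ℂ, Matrix.trace (Φ a) = Matrix.trace (conjMap V a)) ∧
      ((∀ a ∈ J, Matrix.trace (Φ a) = Matrix.trace a) ↔
        ∀ a ∈ J, Matrix.trace (conjMap V a) = Matrix.trace a) := by
  have key : ∀ a : Matrix n n ℂ, Matrix.trace (Φ a) = Matrix.trace (conjMap V a) := by
    intro a
    rw [hΦ a, Matrix.trace_sum]
    simp [conjMap, Matrix.trace]
  exact ⟨key, by constructor <;> intro h a ha <;> [rw [← key a]; rw [key a]] <;> exact h a ha⟩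
end

section
/- Let J ⊆ A be a subspace of a finite-dimensional C*-algebra A and B another finite-dimensional C*-algebra. Then the preimage of J under the partial trace Tr_B : B⊗A → A equals (I_B ⊗ J) ⊕ (T(B) ⊗ A), where T(B) is the subspace of traceless elements of B, and the direct sum is orthogonal with respect to the Hilbert–Schmidt inner product. -/
open Matrix ComplexOrder

variable {n m : Type*} [Fintype n] [DecidableEq n] [Fintype m] [DecidableEq m]

/-- The partial trace over the first factor as a linear map. -/
noncomputable def ptraceL : Matrix (m × n) (m × n) ℂ →ₗ[ℂ] Matrix n n ℂ where
  toFun X := Matrix.of fun a b => ∑ i, X (i, a) (i, b)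
  map_add' X Y := by
    ext a b
    simp [Finset.sum_add_distrib]
  map_smul' c X := by
    ext a b
    simp [Finset.mul_sum]

open Kronecker

set_option linter.unusedSectionVars false

lemma kron_conjTranspose' (t : Matrix m m ℂ) (a : Matrix n n ℂ) :
    (t ⊗ₖ a)ᴴ = tᴴ ⊗ₖ aᴴ := by
  ext ⟨i, x⟩ ⟨j, y⟩
  simp [conjTranspose_apply]

lemma ptraceL_kron' (t : Matrix m m ℂ) (a : Matrix n n ℂ) :
    ptraceL (t ⊗ₖ a) = t.trace • a := by
  ext x y
  simp [ptraceL, Matrix.trace, Matrix.diag, Finset.sum_mul]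

lemma decompX' (X : Matrix (m × n) (m × n) ℂ) (c : ℂ) (hc : c * (Fintype.card m : ℂ) = 1) :
    X - c • ((1 : Matrix m m ℂ) ⊗ₖ ptraceL X) = ∑ i : m, ∑ j : m,
      ((Matrix.single i j (1 : ℂ) - (if i = j then c else 0) • 1) ⊗ₖ
        (Matrix.of fun a b => X (i, a) (j, b))) := by
  ext ⟨i, a⟩ ⟨j, b⟩
  simp only [Matrix.sub_apply, Matrix.smul_apply, Matrix.kroneckerMap_apply,
    Matrix.sum_apply, Matrix.single, Matrix.of_apply, ptraceL,
    LinearMap.coe_mk, AddHom.coe_mk, Matrix.one_apply, smul_eq_mul]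
  rw [Finset.sum_comm]
  by_cases hij : i = j
  · subst hij
    simp [ite_and, sub_mul, Finset.sum_sub_distrib, Finset.mul_sum, Matrix.one_apply,
      mul_ite, ite_mul]
  · simp [ite_and, hij, sub_mul, Finset.sum_sub_distrib, Matrix.one_apply,
      mul_ite, ite_mul]


open Kronecker in
/-- the preimage of a subspace `J ⊆ A` under the partial trace
`Tr_B : B⊗A → A` equals `(I_B ⊗ J) ⊕ (T(B) ⊗ A)`, an orthogonal direct sum with
respect to the Hilbert–Schmidt inner product. -/
theorem ptrace_preimage_eq_orthogonal_sum
    (J : Submodule ℂ (Matrix n n ℂ)) :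
    Submodule.comap (ptraceL (m := m) (n := n)) J =
        Submodule.span ℂ {X : Matrix (m × n) (m × n) ℂ |
            ∃ a ∈ J, X = (1 : Matrix m m ℂ) ⊗ₖ a} ⊔
        Submodule.span ℂ {X : Matrix (m × n) (m × n) ℂ |
            ∃ t : Matrix m m ℂ, Matrix.trace t = 0 ∧ ∃ a : Matrix n n ℂ, X = t ⊗ₖ a} ∧
      ∀ X ∈ Submodule.span ℂ {X : Matrix (m × n) (m × n) ℂ |
            ∃ a ∈ J, X = (1 : Matrix m m ℂ) ⊗ₖ a},
        ∀ Y ∈ Submodule.span ℂ {X : Matrix (m × n) (m × n) ℂ |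
            ∃ t : Matrix m m ℂ, Matrix.trace t = 0 ∧ ∃ a : Matrix n n ℂ, X = t ⊗ₖ a},
          Matrix.trace (Xᴴ * Y) = 0 := by
  
  constructor
  · apply le_antisymm
    · intro X hX
      rw [Submodule.mem_comap] at hX
      by_cases hm : Nonempty m
      · have hcard : (Fintype.card m : ℂ) ≠ 0 := by
          exact_mod_cast Nat.cast_ne_zero.mpr Fintype.card_ne_zero
        set c : ℂ := (Fintype.card m : ℂ)⁻¹ with hc
        have hc1 : c * (Fintype.card m : ℂ) = 1 := inv_mul_cancel₀ hcard
        have h1 : c • ((1 : Matrix m m ℂ) ⊗ₖ ptraceL X) ∈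
            Submodule.span ℂ {Y : Matrix (m × n) (m × n) ℂ |
              ∃ a ∈ J, Y = (1 : Matrix m m ℂ) ⊗ₖ a} :=
          Submodule.smul_mem _ _ (Submodule.subset_span ⟨ptraceL X, hX, rfl⟩)
        have h2 : X - c • ((1 : Matrix m m ℂ) ⊗ₖ ptraceL X) ∈
            Submodule.span ℂ {Y : Matrix (m × n) (m × n) ℂ |
              ∃ t : Matrix m m ℂ, Matrix.trace t = 0 ∧ ∃ a : Matrix n n ℂ, Y = t ⊗ₖ a} := by
          rw [decompX' X c hc1]
          refine Submodule.sum_mem _ fun i _ => Submodule.sum_mem _ fun j _ => ?_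
          refine Submodule.subset_span ?_
          refine ⟨_, ?_, _, rfl⟩
          by_cases hij : i = j
          · subst hij
            simp [Matrix.trace_smul, Matrix.trace_one, hc1,
              Matrix.trace_single_eq_same, mul_comm, Nat.card_eq_fintype_card]
          · simp [hij, Matrix.trace_single_eq_of_ne _ _ _ hij]
        have := Submodule.add_mem _ (Submodule.mem_sup_left h1) (Submodule.mem_sup_right h2)
        simpa using this
      · have hX0 : X = 0 := by
          ext ⟨i, a⟩
          exact absurd ⟨i⟩ hm
        simp [hX0]
    · rw [sup_le_iff]
      constructor <;> rw [Submodule.span_le]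
      · rintro X ⟨a, ha, rfl⟩
        rw [SetLike.mem_coe, Submodule.mem_comap, ptraceL_kron']
        exact Submodule.smul_mem _ _ ha
      · rintro X ⟨t, ht, a, rfl⟩
        rw [SetLike.mem_coe, Submodule.mem_comap, ptraceL_kron', ht]
        simp
  · intro X hX Y hY
    induction hX using Submodule.span_induction with
    | mem x hx =>
      obtain ⟨a, _, rfl⟩ := hx
      induction hY using Submodule.span_induction with
      | mem y hy =>
        obtain ⟨t, ht, b, rfl⟩ := hy
        rw [kron_conjTranspose', ← Matrix.mul_kronecker_mul, Matrix.trace_kronecker]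
        simp [ht]
      | zero => simp
      | add y z _ _ hy hz => simp [Matrix.mul_add, hy, hz]
      | smul d y _ hy => simp [Matrix.mul_smul, hy]
    | zero => simp
    | add x z _ _ hx hz => simp [Matrix.add_mul, hx, hz]
    | smul d x _ hx => simp [Matrix.smul_mul, hx]
end
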